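/- arXiv:1402.0177 — 9 statements merged into one kernel-verified Lean document; each statement's English description precedes it below -/
import Mathlib

section
/- Let G be a nontrivial connected graph of order n. Then the local metric dimension of G equals n−1 if and only if G is the complete graph K_n. -/
open SimpleGraph

/-- A set `S` is a local metric generator for `G` if every pair of adjacent
vertices is distinguished, by distance, by some element of `S`. -/
def IsLocalMetricGenerator {V : Type*} (G : SimpleGraph V) (S : Set V) : Prop :=
  ∀ ⦃u v : V⦄, G.Adj u v → ∃ w ∈ S, G.dist u w ≠ G.dist v w

/-- The local metric dimension of a graph. -/
noncomputable def localMetricDim {V : Type*} [Fintype V] (G : SimpleGraph V) : ℕ :=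
  sInf {k | ∃ S : Finset V, IsLocalMetricGenerator G ↑S ∧ S.card = k}

/-- A local metric basis: a local metric generator of minimum cardinality. -/
def IsLocalMetricBasis {V : Type*} [Fintype V] (G : SimpleGraph V) (S : Finset V) : Prop :=
  IsLocalMetricGenerator G ↑S ∧ S.card = localMetricDim G

lemma adj_dist_ne {V : Type*} (G : SimpleGraph V) {u v : V} (h : G.Adj u v) :
    G.dist u u ≠ G.dist v u := by
  rw [G.dist_self, dist_eq_one_iff_adj.mpr h.symm]
  exact zero_ne_one

/-- Let G be a nontrivial connected graph of order n. Then dim_l(G) = n - 1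
iff G is the complete graph K_n. -/
theorem localMetricDim_eq_card_sub_one_iff {V : Type*} [Fintype V] [Nontrivial V]
    (G : SimpleGraph V) (hG : G.Connected) :
    localMetricDim G = Fintype.card V - 1 ↔ G = ⊤ := by
  classical
  have hcard : 2 ≤ Fintype.card V := Fintype.one_lt_card
  constructor
  · intro h
    by_contra hne
    obtain ⟨u, v, huv, hadj⟩ : ∃ u v : V, u ≠ v ∧ ¬ G.Adj u v := by
      by_contra hc
      push_neg at hc
      apply hne
      ext x y
      simp only [top_adj]
      exact ⟨fun hxy => hxy.ne, fun hxy => hc x y hxy⟩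
    have hgen : IsLocalMetricGenerator G ↑(Finset.univ \ {u, v}) := by
      intro x y hxy
      by_cases hx : x = u ∨ x = v
      · -- then y ∉ {u,v}
        have hy : y ≠ u ∧ y ≠ v := by
          constructor <;> rintro rfl
          · rcases hx with rfl | rfl
            · exact hxy.ne rfl
            · exact hadj hxy.symm
          · rcases hx with rfl | rfl
            · exact hadj hxy
            · exact hxy.ne rfl
        exact ⟨y, by simp [hy.1, hy.2], (adj_dist_ne G hxy.symm).symm⟩
      · push_neg at hx
        exact ⟨x, by simp [hx.1, hx.2], adj_dist_ne G hxy⟩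
    have hle : localMetricDim G ≤ Fintype.card V - 2 := by
      apply Nat.sInf_le
      refine ⟨_, hgen, ?_⟩
      rw [Finset.card_sdiff_of_subset (Finset.subset_univ _), Finset.card_univ,
        Finset.card_pair huv]
    omega
  · rintro rfl
    obtain ⟨v₀, -⟩ := exists_ne (Classical.arbitrary V)
    apply le_antisymm
    · apply Nat.sInf_le
      refine ⟨Finset.univ \ {v₀}, ?_, ?_⟩
      · intro x y hxy
        by_cases hx : x = v₀
        · have hy : y ≠ v₀ := fun h => hxy.ne (hx.trans h.symm)
          exact ⟨y, by simp [hy], (adj_dist_ne _ hxy.symm).symm⟩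
        · exact ⟨x, by simp [hx], adj_dist_ne _ hxy⟩
      · simp [Finset.card_sdiff_of_subset (Finset.subset_univ _)]
    · have hne : {k | ∃ S : Finset V, IsLocalMetricGenerator (⊤ : SimpleGraph V) ↑S ∧ S.card = k}.Nonempty := by
        refine ⟨Fintype.card V, Finset.univ, ?_, by simp⟩
        intro x y hxy
        exact ⟨x, by simp, adj_dist_ne _ hxy⟩
      obtain ⟨S, hS, hScard⟩ := Nat.sInf_mem hne
      unfold localMetricDim
      rw [← hScard]
      by_contra hlt
      push_neg at hlt
      have : 2 ≤ (Finset.univ \ S).card := by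
        rw [Finset.card_sdiff_of_subset (Finset.subset_univ _), Finset.card_univ]
        omega
      obtain ⟨u, hu, v, hv, huv⟩ := Finset.one_lt_card.mp this
      simp only [Finset.mem_sdiff, Finset.mem_univ, true_and] at hu hv
      obtain ⟨w, hw, hdw⟩ := hS (show (⊤ : SimpleGraph V).Adj u v from huv)
      apply hdw
      have hwu : w ≠ u := fun h => hu (h ▸ hw)
      have hwv : w ≠ v := fun h => hv (h ▸ hw)
      rw [(dist_eq_one_iff_adj).mpr (show (⊤:SimpleGraph V).Adj u w from hwu.symm),
        (dist_eq_one_iff_adj).mpr (show (⊤:SimpleGraph V).Adj v w from hwv.symm)]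
end

section
/- Let G be a nontrivial connected graph. Then the local metric dimension of G equals 1 if and only if G is bipartite. -/
open SimpleGraph

private lemma coloring_walk_parity {V : Type*} {G : SimpleGraph V}
    (c : G.Coloring (ZMod 2)) {u v : V} (p : G.Walk u v) :
    c u = c v + (p.length : ZMod 2) := by
  induction p with
  | nil => simp
  | cons h p ih =>
    rename_i a b w
    have hne : c a ≠ c b := c.valid h
    have : c a = c b + 1 := by
      revert hne; generalize c a = x; generalize c b = y; revert x y; decide
    rw [this, ih, SimpleGraph.Walk.length_cons]
    push_cast
    ring

/-- Let G be a nontrivial connected graph. Then dim_l(G) = 1 iff G is bipartite. -/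
theorem localMetricDim_eq_one_iff {V : Type*} [Fintype V] [Nontrivial V]
    (G : SimpleGraph V) (hG : G.Connected) :
    localMetricDim G = 1 ↔ G.Colorable 2 := by
  classical
  -- there exists an edge
  obtain ⟨a, b, hab⟩ := Nontrivial.exists_pair_ne (α := V)
  have hreach := (hG a b).exists_walk_length_eq_dist
  obtain ⟨p, -⟩ := hreach
  have hedge : ∃ x y : V, G.Adj x y := by
    have hlen : p.length ≠ 0 := by
      intro h0
      exact hab (SimpleGraph.Walk.eq_of_length_eq_zero h0)
    cases p with
    | nil => exact absurd rfl hlen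
    | cons h q => exact ⟨_, _, h⟩
  obtain ⟨x, y, hxy⟩ := hedge
  have hzero : (0 : ℕ) ∉ {k | ∃ S : Finset V, IsLocalMetricGenerator G ↑S ∧ S.card = k} := by
    rintro ⟨S, hS, hcard⟩
    rw [Finset.card_eq_zero] at hcard
    obtain ⟨w, hw, -⟩ := hS hxy
    simp [hcard] at hw
  constructor
  · intro h1
    -- the set is nonempty since it contains univ's card; in fact sInf = 1 gives a member
    have hmem : (1 : ℕ) ∈ {k | ∃ S : Finset V, IsLocalMetricGenerator G ↑S ∧ S.card = k} := by
      have hne : {k | ∃ S : Finset V, IsLocalMetricGenerator G ↑S ∧ S.card = k}.Nonempty := by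
        refine ⟨(Finset.univ : Finset V).card, Finset.univ, ?_, rfl⟩
        intro u v huv
        refine ⟨u, by simp, ?_⟩
        simp only [SimpleGraph.dist_self]
        exact (hG.pos_dist_of_ne (G.ne_of_adj huv.symm)).ne
      have := Nat.sInf_mem hne
      rw [localMetricDim] at h1
      rwa [h1] at this
    obtain ⟨S, hS, hcard⟩ := hmem
    rw [Finset.card_eq_one] at hcard
    obtain ⟨w, rfl⟩ := hcard
    -- color by parity of distance to w
    refine ⟨fun v => (G.dist v w : ZMod 2), ?_⟩
    intro u v huv
    show (G.dist u w : ZMod 2) ≠ (G.dist v w : ZMod 2)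
    obtain ⟨z, hz, hne⟩ := hS huv
    simp only [Finset.coe_singleton, Set.mem_singleton_iff] at hz
    subst hz
    -- dists differ by exactly one
    have h1' : G.dist u z ≤ G.dist v z + 1 := by
      have := hG.dist_triangle (u := u) (v := v) (w := z)
      rwa [SimpleGraph.dist_eq_one_iff_adj.mpr huv, add_comm] at this
    have h2' : G.dist v z ≤ G.dist u z + 1 := by
      have := hG.dist_triangle (u := v) (v := u) (w := z)
      rwa [SimpleGraph.dist_eq_one_iff_adj.mpr huv.symm, add_comm] at this
    have : G.dist u z = G.dist v z + 1 ∨ G.dist v z = G.dist u z + 1 := by omega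
    rcases this with h | h <;> rw [h] <;> push_cast <;>
      intro hh <;>
      · have h10 : (1 : ZMod 2) = 0 := by
          revert hh; generalize (G.dist u z : ZMod 2) = t; generalize (G.dist v z : ZMod 2) = s
          revert t s; decide
        simp at h10
  · rintro ⟨c⟩
    -- show 1 is in the set and 0 is not
    have c' : G.Coloring (ZMod 2) := c
    have hmem : (1 : ℕ) ∈ {k | ∃ S : Finset V, IsLocalMetricGenerator G ↑S ∧ S.card = k} := by
      refine ⟨{x}, ?_, Finset.card_singleton x⟩
      intro u v huv
      refine ⟨x, by simp, ?_⟩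
      intro hEq
      obtain ⟨p, hp⟩ := (hG u x).exists_walk_length_eq_dist
      obtain ⟨q, hq⟩ := (hG v x).exists_walk_length_eq_dist
      have h1 := coloring_walk_parity c' p
      have h2 := coloring_walk_parity c' q
      rw [hp] at h1; rw [hq] at h2
      rw [hEq] at h1
      exact c'.valid huv (h1.trans h2.symm)
    refine le_antisymm (Nat.sInf_le hmem) ?_
    rcases Nat.eq_zero_or_pos (localMetricDim G) with h | h
    · exact absurd (h ▸ Nat.sInf_mem ⟨1, hmem⟩) hzero
    · exact h
end

section
/- A connected graph G of order n ≥ 3 has local metric dimension n−2 if and only if its clique number ω(G) equals n−1. -/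
open SimpleGraph

namespace LMDAux

variable {V : Type*}

/-- Closed neighborhood, as a set. -/
def cn (G : SimpleGraph V) (u : V) : Set V := {w | w = u ∨ G.Adj u w}

lemma mem_cn_self (G : SimpleGraph V) (u : V) : u ∈ cn G u := Or.inl rfl

lemma mem_cn_of_adj {G : SimpleGraph V} {u w : V} (h : G.Adj u w) : w ∈ cn G u := Or.inr h

lemma cn_symm {G : SimpleGraph V} {u w : V} : w ∈ cn G u ↔ u ∈ cn G w := by
  constructor
  · rintro (rfl | h)
    · exact mem_cn_self G w
    · exact Or.inr h.symm
  · rintro (rfl | h)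
    · exact mem_cn_self G u
    · exact Or.inr h.symm

lemma adj_of_mem_cn {G : SimpleGraph V} {u w : V} (h : w ∈ cn G u) (hne : w ≠ u) :
    G.Adj u w := h.resolve_left hne

lemma not_adj_of_notMem_cn {G : SimpleGraph V} {u w : V} (h : w ∉ cn G u) : ¬ G.Adj u w :=
  fun ha => h (Or.inr ha)

lemma ne_of_notMem_cn {G : SimpleGraph V} {u w : V} (h : w ∉ cn G u) : w ≠ u :=
  fun he => h (Or.inl he)

lemma dist_ne_of_cn {G : SimpleGraph V} (hG : G.Connected) {u v w : V}
    (h1 : w ∈ cn G u) (h2 : w ∉ cn G v) : G.dist u w ≠ G.dist v w := by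
  have hwv : w ≠ v := ne_of_notMem_cn h2
  rcases h1 with rfl | hadj
  · have h0 : G.dist w w = 0 := G.dist_self
    have hp : 0 < G.dist v w := hG.pos_dist_of_ne (Ne.symm hwv)
    omega
  · have h1' : G.dist u w = 1 := dist_eq_one_iff_adj (G := G).mpr hadj
    have h2' : G.dist v w ≠ 1 := fun h => h2 (mem_cn_of_adj (dist_eq_one_iff_adj (G := G).mp h))
    omega

lemma gen_univ [Fintype V] {G : SimpleGraph V} (hG : G.Connected) :
    IsLocalMetricGenerator G ↑(Finset.univ : Finset V) := by
  intro u v huv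
  refine ⟨u, by simp, ?_⟩
  have h0 : G.dist u u = 0 := G.dist_self
  have hp : 0 < G.dist v u := hG.pos_dist_of_ne huv.ne'
  omega

lemma exists_gen_card_dim [Fintype V] {G : SimpleGraph V} (hG : G.Connected) :
    ∃ S : Finset V, IsLocalMetricGenerator G ↑S ∧ S.card = localMetricDim G := by
  have hne : Set.Nonempty {k | ∃ S : Finset V, IsLocalMetricGenerator G ↑S ∧ S.card = k} :=
    ⟨(Finset.univ : Finset V).card, Finset.univ, gen_univ hG, rfl⟩
  exact Nat.sInf_mem hne

lemma dim_le_card [Fintype V] {G : SimpleGraph V} {S : Finset V}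
    (h : IsLocalMetricGenerator G ↑S) : localMetricDim G ≤ S.card :=
  Nat.sInf_le ⟨S, h, rfl⟩

/-- An adjacent pair inside the triple `{x,y,z}` whose closed neighborhoods agree
outside the triple. -/
def Bad (G : SimpleGraph V) (x y z : V) : Prop :=
  ∃ u v, G.Adj u v ∧ (u = x ∨ u = y ∨ u = z) ∧ (v = x ∨ v = y ∨ v = z) ∧
    ∀ s, s ≠ x → s ≠ y → s ≠ z → (s ∈ cn G u ↔ s ∈ cn G v)

lemma bad_triple [Fintype V] {G : SimpleGraph V} (hG : G.Connected)
    (hdim : localMetricDim G = Fintype.card V - 2) (hn : 3 ≤ Fintype.card V) :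
    ∀ x y z : V, x ≠ y → x ≠ z → y ≠ z → Bad G x y z := by
  classical
  intro x y z hxy hxz hyz
  set S : Finset V := Finset.univ \ {x, y, z} with hS
  have hcard3 : ({x, y, z} : Finset V).card = 3 := by
    rw [Finset.card_insert_of_notMem (by simp [hxy, hxz]),
      Finset.card_insert_of_notMem (by simp [hyz]), Finset.card_singleton]
  have hScard : S.card = Fintype.card V - 3 := by
    rw [hS, Finset.card_sdiff_of_subset (Finset.subset_univ _), hcard3, Finset.card_univ]
  have hnotgen : ¬ IsLocalMetricGenerator G ↑S := by
    intro h
    have hle := dim_le_card h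
    omega
  have hex : ∃ u v, G.Adj u v ∧ ∀ w ∈ S, G.dist u w = G.dist v w := by
    by_contra hc
    push_neg at hc
    exact hnotgen fun u v huv => by
      obtain ⟨w, hw, hne⟩ := hc u v huv
      exact ⟨w, hw, hne⟩
  obtain ⟨u, v, huv, hall⟩ := hex
  have hmemS : ∀ w : V, w ≠ x → w ≠ y → w ≠ z → w ∈ S := by
    intro w h1 h2 h3
    simp [hS, h1, h2, h3]
  have hu : u = x ∨ u = y ∨ u = z := by
    by_contra hc
    push_neg at hc
    have h0 := hall u (hmemS u hc.1 hc.2.1 hc.2.2)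
    have h1 : G.dist u u = 0 := G.dist_self
    have h2 : 0 < G.dist v u := hG.pos_dist_of_ne huv.ne'
    omega
  have hv : v = x ∨ v = y ∨ v = z := by
    by_contra hc
    push_neg at hc
    have h0 := hall v (hmemS v hc.1 hc.2.1 hc.2.2)
    have h1 : G.dist v v = 0 := G.dist_self
    have h2 : 0 < G.dist u v := hG.pos_dist_of_ne huv.ne
    omega
  refine ⟨u, v, huv, hu, hv, ?_⟩
  intro s h1 h2 h3
  have heq := hall s (hmemS s h1 h2 h3)
  constructor
  · intro hs
    by_contra hs2
    exact dist_ne_of_cn hG hs hs2 heq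
  · intro hs
    by_contra hs2
    exact dist_ne_of_cn hG hs hs2 heq.symm

lemma complete_of_alltwins {G : SimpleGraph V} (hG : G.Connected)
    (h : ∀ x y, G.Adj x y → cn G x = cn G y) : ∀ u v : V, u ≠ v → G.Adj u v := by
  have key : ∀ u v : V, G.Reachable u v → v ∈ cn G u := by
    intro u v hr
    obtain ⟨p⟩ := hr
    induction p with
    | nil => exact mem_cn_self G _
    | cons hadj q ih =>
      rw [h _ _ hadj]
      exact ih
  intro u v hne
  exact adj_of_mem_cn (key u v (hG.preconnected u v)) (Ne.symm hne)

/-- The core structural lemma: if every triple is bad and `x, y` are adjacent with a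
witness `z ∈ N[x] \ N[y]`, then deleting some vertex leaves a clique. -/
lemma core {G : SimpleGraph V} (hG : G.Connected)
    (hbad : ∀ a b c : V, a ≠ b → a ≠ c → b ≠ c → Bad G a b c)
    {x y z : V} (hadj : G.Adj x y) (hz1 : z ∈ cn G x) (hz2 : z ∉ cn G y) :
    ∃ t : V, G.IsClique {w : V | w ≠ t} := by
  have hxy : x ≠ y := hadj.ne
  have hxcny : x ∈ cn G y := mem_cn_of_adj hadj.symm
  have hycnx : y ∈ cn G x := mem_cn_of_adj hadj
  have hzx : z ≠ x := fun h => hz2 (h ▸ hxcny)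
  have hzy : z ≠ y := fun h => hz2 (h ▸ mem_cn_self G y)
  set A : Set V := {w | w ∈ cn G x ∧ ∀ s, s ≠ y → (s ∈ cn G w ↔ s ∈ cn G x)} with hA
  set B : Set V := {w | w ∈ cn G y ∧ ∀ s, s ≠ x → (s ∈ cn G w ↔ s ∈ cn G y)} with hB
  have hxA : x ∈ A := ⟨mem_cn_self G x, fun s _ => Iff.rfl⟩
  have hyB : y ∈ B := ⟨mem_cn_self G y, fun s _ => Iff.rfl⟩
  have hyA : y ∉ A := fun h => hz2 ((h.2 z hzy).mpr hz1)
  have hxB : x ∉ B := fun h => hz2 ((h.2 z hzx).mp hz1)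
  have hAadj : ∀ w ∈ A, ∀ w' ∈ A, w ≠ w' → G.Adj w w' := by
    intro w hw w' hw' hne
    have h1 : w' ≠ y := fun h => hyA (h ▸ hw')
    have h2 : w' ∈ cn G w := (hw.2 w' h1).mpr hw'.1
    exact adj_of_mem_cn h2 (Ne.symm hne)
  have hBadj : ∀ w ∈ B, ∀ w' ∈ B, w ≠ w' → G.Adj w w' := by
    intro w hw w' hw' hne
    have h1 : w' ≠ x := fun h => hxB (h ▸ hw')
    have h2 : w' ∈ cn G w := (hw.2 w' h1).mpr hw'.1
    exact adj_of_mem_cn h2 (Ne.symm hne)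
  have hcover : ∀ w : V, w ≠ z → w ∈ A ∨ w ∈ B := by
    intro w hwz
    by_cases hwx : w = x
    · exact Or.inl (hwx ▸ hxA)
    by_cases hwy : w = y
    · exact Or.inr (hwy ▸ hyB)
    have mkA : G.Adj x w → (∀ s, s ≠ x → s ≠ y → s ≠ w → (s ∈ cn G w ↔ s ∈ cn G x)) →
        w ∈ A := by
      intro ha hE'
      refine ⟨mem_cn_of_adj ha, fun s hsy => ?_⟩
      by_cases hsx : s = x
      · subst hsx
        exact iff_of_true (cn_symm.mp (mem_cn_of_adj ha)) (mem_cn_self G s)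
      by_cases hsw : s = w
      · subst hsw
        exact iff_of_true (mem_cn_self G s) (mem_cn_of_adj ha)
      · exact hE' s hsx hsy hsw
    have mkB : G.Adj y w → (∀ s, s ≠ x → s ≠ y → s ≠ w → (s ∈ cn G w ↔ s ∈ cn G y)) →
        w ∈ B := by
      intro ha hE'
      refine ⟨mem_cn_of_adj ha, fun s hsx => ?_⟩
      by_cases hsy : s = y
      · subst hsy
        exact iff_of_true (cn_symm.mp (mem_cn_of_adj ha)) (mem_cn_self G s)
      by_cases hsw : s = w
      · subst hsw
        exact iff_of_true (mem_cn_self G s) (mem_cn_of_adj ha)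
      · exact hE' s hsx hsy hsw
    obtain ⟨u, v, huv, hu, hv, hE⟩ := hbad x y w hxy (Ne.symm hwx) (Ne.symm hwy)
    rcases hu with h | h | h <;> subst h <;> rcases hv with h' | h' | h' <;> subst h'
    · exact absurd huv G.irrefl
    · exact absurd ((hE z hzx hzy (Ne.symm hwz)).mp hz1) hz2
    · exact Or.inl (mkA huv fun s h1 h2 h3 => (hE s h1 h2 h3).symm)
    · exact absurd ((hE z hzx hzy (Ne.symm hwz)).mpr hz1) hz2
    · exact absurd huv G.irrefl
    · exact Or.inr (mkB huv fun s h1 h2 h3 => (hE s h1 h2 h3).symm)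
    · exact Or.inl (mkA huv.symm fun s h1 h2 h3 => hE s h1 h2 h3)
    · exact Or.inr (mkB huv.symm fun s h1 h2 h3 => hE s h1 h2 h3)
    · exact absurd huv G.irrefl
  have hB1 : ∀ b ∈ B, x ∈ cn G b := by
    intro b hb
    by_contra hbx
    have hby : b ≠ y := fun h => hbx (h ▸ hxcny)
    have hbxne : b ≠ x := fun h => hbx (h ▸ mem_cn_self G x)
    have hbz : b ≠ z := fun h => hz2 (h ▸ hb.1)
    obtain ⟨u, v, huv, hu, hv, hE⟩ :=
      hbad y z b (Ne.symm hzy) (Ne.symm hby) (Ne.symm hbz)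
    rcases hu with h | h | h <;> subst h <;> rcases hv with h' | h' | h' <;> subst h'
    · exact absurd huv G.irrefl
    · exact hz2 (mem_cn_of_adj huv)
    · exact hbx ((hE x hxy (Ne.symm hzx) (Ne.symm hbxne)).mp hxcny)
    · exact hz2 (mem_cn_of_adj huv.symm)
    · exact absurd huv G.irrefl
    · exact hbx ((hE x hxy (Ne.symm hzx) (Ne.symm hbxne)).mp (cn_symm.mp hz1))
    · exact hbx ((hE x hxy (Ne.symm hzx) (Ne.symm hbxne)).mpr hxcny)
    · exact hbx ((hE x hxy (Ne.symm hzx) (Ne.symm hbxne)).mpr (cn_symm.mp hz1))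
    · exact absurd huv G.irrefl
  by_cases hA1 : ∃ a ∈ A, y ∉ cn G a
  · obtain ⟨a, haA, hay⟩ := hA1
    have hax : a ≠ y := fun h => hay (h ▸ mem_cn_self G y)
    have hzA : z ∈ A := by
      by_cases haz : a = z
      · exact haz ▸ haA
      have main : G.Adj z a ∧
          ∀ s, s ≠ y → s ≠ z → s ≠ a → (s ∈ cn G z ↔ s ∈ cn G a) := by
        obtain ⟨u, v, huv, hu, hv, hE⟩ :=
          hbad y z a (Ne.symm hzy) (Ne.symm hax) (fun h => haz h.symm)
        rcases hu with h | h | h <;> subst h <;> rcases hv with h' | h' | h' <;> subst h'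
        · exact absurd huv G.irrefl
        · exact absurd (mem_cn_of_adj huv) hz2
        · exact absurd (mem_cn_of_adj huv.symm) hay
        · exact absurd (mem_cn_of_adj huv.symm) hz2
        · exact absurd huv G.irrefl
        · exact ⟨huv, fun s h1 h2 h3 => hE s h1 h2 h3⟩
        · exact absurd (mem_cn_of_adj huv) hay
        · exact ⟨huv.symm, fun s h1 h2 h3 => (hE s h1 h2 h3).symm⟩
        · exact absurd huv G.irrefl
      obtain ⟨hza, hEza⟩ := main
      have key : ∀ s, s ≠ y → (s ∈ cn G z ↔ s ∈ cn G a) := by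
        intro s hsy
        by_cases hsz : s = z
        · subst hsz
          exact iff_of_true (mem_cn_self G s) (cn_symm.mp (mem_cn_of_adj hza))
        by_cases hsa : s = a
        · subst hsa
          exact iff_of_true (mem_cn_of_adj hza) (mem_cn_self G s)
        · exact hEza s hsy hsz hsa
      exact ⟨hz1, fun s hsy => (key s hsy).trans (haA.2 s hsy)⟩
    have hBy : ∀ b ∈ B, b = y := by
      intro b hb
      by_contra hby
      have hxb : x ∈ cn G b := hB1 b hb
      have hcnb : ∀ s, s ∈ cn G b ↔ s ∈ cn G y := by
        intro s
        by_cases hsx : s = x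
        · subst hsx
          exact iff_of_true hxb hxcny
        · exact hb.2 s hsx
      have hbcnx : b ∈ cn G x := cn_symm.mp hxb
      have hbcna : b ∈ cn G a := (haA.2 b hby).mpr hbcnx
      have hacny : a ∈ cn G y := (hcnb a).mp (cn_symm.mp hbcna)
      exact hay (cn_symm.mp hacny)
    refine ⟨y, ?_⟩
    intro w hw w' hw' hne
    have hwA : ∀ p : V, p ≠ y → p ∈ A := by
      intro p hp
      by_cases hpz : p = z
      · exact hpz ▸ hzA
      rcases hcover p hpz with h | h
      · exact h
      · exact absurd (hBy p h) hp
    exact hAadj w (hwA w hw) w' (hwA w' hw') hne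
  · push_neg at hA1
    refine ⟨z, ?_⟩
    have hAB : ∀ w ∈ A, ∀ w' ∈ B, w ≠ w' → G.Adj w w' := by
      intro w hw w' hw' hne
      by_cases hw'y : w' = y
      · subst hw'y
        exact adj_of_mem_cn (hA1 w hw) (Ne.symm hne)
      · have h1 : w' ∈ cn G x := cn_symm.mp (hB1 w' hw')
        have h2 : w' ∈ cn G w := (hw.2 w' hw'y).mpr h1
        exact adj_of_mem_cn h2 (Ne.symm hne)
    intro w hw w' hw' hne
    rcases hcover w hw with h1 | h1 <;> rcases hcover w' hw' with h2 | h2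
    · exact hAadj w h1 w' h2 hne
    · exact hAB w h1 w' h2 hne
    · exact (hAB w' h2 w h1 (Ne.symm hne)).symm
    · exact hBadj w h1 w' h2 hne

lemma cliqueNum_of [Fintype V] {G : SimpleGraph V} (hn : 3 ≤ Fintype.card V)
    (hnc : ¬ ∀ u v : V, u ≠ v → G.Adj u v)
    (h : ∃ t : V, G.IsClique {w : V | w ≠ t}) :
    G.cliqueNum = Fintype.card V - 1 := by
  classical
  obtain ⟨t, ht⟩ := h
  have h1 : Fintype.card V - 1 ≤ G.cliqueNum := by
    have hset : ((Finset.univ.erase t : Finset V) : Set V) = {w : V | w ≠ t} := by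
      ext w; simp
    have hcl : G.IsClique ((Finset.univ.erase t : Finset V) : Set V) := by
      rw [hset]; exact ht
    have hle := SimpleGraph.IsClique.card_le_cliqueNum (tc := hcl)
    rwa [Finset.card_erase_of_mem (Finset.mem_univ t), Finset.card_univ] at hle
  have h2 : G.cliqueNum ≤ Fintype.card V - 1 := by
    by_contra hlt
    push_neg at hlt
    obtain ⟨s, hs⟩ := G.exists_isNClique_cliqueNum
    have hcard : s.card = G.cliqueNum := hs.2
    have hle : s.card ≤ Fintype.card V := Finset.card_le_univ s
    have hsu : s = Finset.univ := Finset.eq_univ_of_card s (by omega)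
    apply hnc
    intro u v huv
    exact hs.1 (by simp [hsu]) (by simp [hsu]) huv
  omega

lemma forward [Fintype V] {G : SimpleGraph V} (hG : G.Connected)
    (hn : 3 ≤ Fintype.card V) (hdim : localMetricDim G = Fintype.card V - 2) :
    G.cliqueNum = Fintype.card V - 1 := by
  classical
  by_cases hcomp : ∀ u v : V, u ≠ v → G.Adj u v
  · exfalso
    obtain ⟨S, hSgen, hScard⟩ := exists_gen_card_dim hG
    rw [hdim] at hScard
    have hcompl : (Finset.univ \ S).card = 2 := by
      rw [Finset.card_sdiff_of_subset (Finset.subset_univ _), Finset.card_univ, hScard]; omega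
    obtain ⟨u, v, huv, hset⟩ := Finset.card_eq_two.mp hcompl
    have hu : u ∉ S := by
      have : u ∈ Finset.univ \ S := by rw [hset]; simp
      exact (Finset.mem_sdiff.mp this).2
    have hv : v ∉ S := by
      have : v ∈ Finset.univ \ S := by rw [hset]; simp
      exact (Finset.mem_sdiff.mp this).2
    obtain ⟨w, hwS, hwne⟩ := hSgen (hcomp u v huv)
    have hwS' : w ∈ S := hwS
    have hwu : u ≠ w := fun h => hu (h ▸ hwS')
    have hwv : v ≠ w := fun h => hv (h ▸ hwS')
    have e1 : G.dist u w = 1 := dist_eq_one_iff_adj (G := G).mpr (hcomp u w hwu)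
    have e2 : G.dist v w = 1 := dist_eq_one_iff_adj (G := G).mpr (hcomp v w hwv)
    exact hwne (e1.trans e2.symm)
  · have hbad := bad_triple hG hdim hn
    have hnt : ∃ x y, G.Adj x y ∧ ¬ cn G x = cn G y := by
      by_contra hc
      push_neg at hc
      exact hcomp (complete_of_alltwins hG fun x y h => hc x y h)
    obtain ⟨x, y, hadj, hne⟩ := hnt
    have hzex : ∃ z, (z ∈ cn G x ∧ z ∉ cn G y) ∨ (z ∈ cn G y ∧ z ∉ cn G x) := by
      by_contra hc
      push_neg at hc
      exact hne (Set.ext fun s => ⟨(hc s).1, (hc s).2⟩)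
    obtain ⟨z, hz | hz⟩ := hzex
    · exact cliqueNum_of hn hcomp (core hG hbad hadj hz.1 hz.2)
    · exact cliqueNum_of hn hcomp (core hG hbad hadj.symm hz.1 hz.2)

lemma reverse [Fintype V] {G : SimpleGraph V} (hG : G.Connected)
    (hn : 3 ≤ Fintype.card V) (hw : G.cliqueNum = Fintype.card V - 1) :
    localMetricDim G = Fintype.card V - 2 := by
  classical
  obtain ⟨C, hC⟩ := G.exists_isNClique_cliqueNum
  rw [hw] at hC
  have hCcl : G.IsClique (C : Set V) := hC.1
  have hCcard : C.card = Fintype.card V - 1 := hC.2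
  have hcompl : (Finset.univ \ C).card = 1 := by
    rw [Finset.card_sdiff_of_subset (Finset.subset_univ _), Finset.card_univ, hCcard]; omega
  obtain ⟨v, hv⟩ := Finset.card_eq_one.mp hcompl
  have hvC : v ∉ C := by
    have : v ∈ Finset.univ \ C := by rw [hv]; exact Finset.mem_singleton_self v
    exact (Finset.mem_sdiff.mp this).2
  have hmemC : ∀ w : V, w ≠ v → w ∈ C := by
    intro w hwv
    by_contra hc
    have h1 : w ∈ Finset.univ \ C := Finset.mem_sdiff.mpr ⟨Finset.mem_univ w, hc⟩
    rw [hv] at h1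
    exact hwv (Finset.mem_singleton.mp h1)
  have hCadj : ∀ p q : V, p ≠ v → q ≠ v → p ≠ q → G.Adj p q :=
    fun p q hp hq hpq => hCcl (hmemC p hp) (hmemC q hq) hpq
  have hs0 : ∃ s₀ : V, s₀ ≠ v ∧ ¬ G.Adj v s₀ := by
    by_contra hc
    push_neg at hc
    have hcl : G.IsClique ((Finset.univ : Finset V) : Set V) := by
      intro p hp q hq hpq
      by_cases hpv : p = v
      · subst hpv; exact hc q (Ne.symm hpq)
      by_cases hqv : q = v
      · subst hqv; exact (hc p hpv).symm
      · exact hCadj p q hpv hqv hpq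
    have hle := SimpleGraph.IsClique.card_le_cliqueNum (tc := hcl)
    rw [Finset.card_univ, hw] at hle
    omega
  obtain ⟨s₀, hs0v, hs0adj⟩ := hs0
  have hs0C : s₀ ∈ C := hmemC s₀ hs0v
  have huex : ∃ u : V, G.Adj v u := by
    obtain ⟨p⟩ := hG.preconnected v s₀
    cases p with
    | nil => exact absurd rfl hs0v
    | cons h q => exact ⟨_, h⟩
  obtain ⟨u, hvu⟩ := huex
  have huv : u ≠ v := hvu.ne'
  have huC : u ∈ C := hmemC u huv
  have hs0u : s₀ ≠ u := fun h => hs0adj (h ▸ hvu)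
  set S : Finset V := C.erase u with hSdef
  have hSmem : ∀ w : V, w ∈ S ↔ (w ≠ u ∧ w ∈ C) := fun w => Finset.mem_erase
  have hgen : IsLocalMetricGenerator G ↑S := by
    intro p q hpq
    by_cases hp : p ∈ S
    · refine ⟨p, hp, ?_⟩
      have h0 : G.dist p p = 0 := G.dist_self
      have h1 : 0 < G.dist q p := hG.pos_dist_of_ne hpq.ne'
      omega
    by_cases hq : q ∈ S
    · refine ⟨q, hq, ?_⟩
      have h0 : G.dist q q = 0 := G.dist_self
      have h1 : 0 < G.dist p q := hG.pos_dist_of_ne hpq.ne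
      omega
    have hp' : p = u ∨ p = v := by
      rcases eq_or_ne p v with h | h
      · exact Or.inr h
      · left
        by_contra hpu
        exact hp ((hSmem p).mpr ⟨hpu, hmemC p h⟩)
    have hq' : q = u ∨ q = v := by
      rcases eq_or_ne q v with h | h
      · exact Or.inr h
      · left
        by_contra hqu
        exact hq ((hSmem q).mpr ⟨hqu, hmemC q h⟩)
    have hds0 : G.dist u s₀ = 1 :=
      dist_eq_one_iff_adj (G := G).mpr (hCadj u s₀ huv hs0v (Ne.symm hs0u))
    have hds0' : G.dist v s₀ ≠ 1 := fun h => hs0adj (dist_eq_one_iff_adj (G := G).mp h)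
    have hs0S : s₀ ∈ S := (hSmem s₀).mpr ⟨hs0u, hs0C⟩
    rcases hp' with rfl | rfl <;> rcases hq' with rfl | rfl
    · exact absurd hpq G.irrefl
    · exact ⟨s₀, hs0S, by rw [hds0]; exact Ne.symm hds0'⟩
    · exact ⟨s₀, hs0S, by rw [hds0]; exact hds0'⟩
    · exact absurd hpq G.irrefl
  have hScard : S.card = Fintype.card V - 2 := by
    rw [hSdef, Finset.card_erase_of_mem huC, hCcard]
    omega
  have hupper : localMetricDim G ≤ Fintype.card V - 2 := by
    rw [← hScard]; exact dim_le_card hgen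
  have hdist2 : ∀ c : V, c ∈ C → G.dist c v = 1 ∨ G.dist c v = 2 := by
    intro c hc
    have hcv : c ≠ v := fun h => hvC (h ▸ hc)
    have h1 : 0 < G.dist c v := hG.pos_dist_of_ne hcv
    have htri := hG.dist_triangle (u := c) (v := u) (w := v)
    have hduv : G.dist u v = 1 := dist_eq_one_iff_adj (G := G).mpr hvu.symm
    have hdcu : G.dist c u ≤ 1 := by
      rcases eq_or_ne c u with rfl | h
      · rw [G.dist_self]; omega
      · rw [dist_eq_one_iff_adj (G := G).mpr (hCadj c u hcv huv h)]
    omega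
  have hlower : ∀ T : Finset V, IsLocalMetricGenerator G ↑T →
      Fintype.card V - 2 ≤ T.card := by
    intro T hT
    by_contra hcon
    push_neg at hcon
    have hcompl3 : 3 ≤ (Finset.univ \ T).card := by
      rw [Finset.card_sdiff_of_subset (Finset.subset_univ _), Finset.card_univ]; omega
    have hkill : ∀ p q : V, p ≠ q → p ∉ T → q ∉ T → p ∈ C → q ∈ C →
        G.dist p v = G.dist q v → False := by
      intro p q hpq hpT hqT hpC hqC hdeq
      have hadj : G.Adj p q := hCcl hpC hqC hpq
      obtain ⟨w, hwT, hwne⟩ := hT hadj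
      have hwT' : w ∈ T := hwT
      rcases eq_or_ne w v with rfl | hwv
      · exact hwne hdeq
      · have hwC : w ∈ C := hmemC w hwv
        have hpw : p ≠ w := fun h => hpT (h ▸ hwT')
        have hqw : q ≠ w := fun h => hqT (h ▸ hwT')
        have e1 : G.dist p w = 1 := dist_eq_one_iff_adj (G := G).mpr (hCcl hpC hwC hpw)
        have e2 : G.dist q w = 1 := dist_eq_one_iff_adj (G := G).mpr (hCcl hqC hwC hqw)
        exact hwne (e1.trans e2.symm)
    by_cases hvT : v ∈ T
    · have hsub : Finset.univ \ T ⊆ C := by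
        intro w hw'
        have hwT : w ∉ T := (Finset.mem_sdiff.mp hw').2
        exact hmemC w (fun h => hwT (h ▸ hvT))
      obtain ⟨a, b, c, ha, hb, hc', hab, hac, hbc⟩ :=
        Finset.two_lt_card_iff.mp (by omega : 2 < (Finset.univ \ T).card)
      have haT : a ∉ T := (Finset.mem_sdiff.mp ha).2
      have hbT : b ∉ T := (Finset.mem_sdiff.mp hb).2
      have hcT : c ∉ T := (Finset.mem_sdiff.mp hc').2
      have haC : a ∈ C := hsub ha
      have hbC : b ∈ C := hsub hb
      have hcC : c ∈ C := hsub hc'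
      rcases hdist2 a haC with h1 | h1 <;> rcases hdist2 b hbC with h2 | h2 <;>
        rcases hdist2 c hcC with h3 | h3
      · exact hkill a b hab haT hbT haC hbC (h1.trans h2.symm)
      · exact hkill a b hab haT hbT haC hbC (h1.trans h2.symm)
      · exact hkill a c hac haT hcT haC hcC (h1.trans h3.symm)
      · exact hkill b c hbc hbT hcT hbC hcC (h2.trans h3.symm)
      · exact hkill b c hbc hbT hcT hbC hcC (h2.trans h3.symm)
      · exact hkill a c hac haT hcT haC hcC (h1.trans h3.symm)
      · exact hkill a b hab haT hbT haC hbC (h1.trans h2.symm)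
      · exact hkill a b hab haT hbT haC hbC (h1.trans h2.symm)
    · have hvmem : v ∈ Finset.univ \ T := Finset.mem_sdiff.mpr ⟨Finset.mem_univ v, hvT⟩
      have h2' : 1 < ((Finset.univ \ T).erase v).card := by
        have := Finset.card_erase_of_mem hvmem
        omega
      obtain ⟨p, hp, q, hq, hpq⟩ := Finset.one_lt_card.mp h2'
      have hpv : p ≠ v := (Finset.mem_erase.mp hp).1
      have hqv : q ≠ v := (Finset.mem_erase.mp hq).1
      have hpT : p ∉ T := (Finset.mem_sdiff.mp (Finset.mem_erase.mp hp).2).2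
      have hqT : q ∉ T := (Finset.mem_sdiff.mp (Finset.mem_erase.mp hq).2).2
      have hpC : p ∈ C := hmemC p hpv
      have hqC : q ∈ C := hmemC q hqv
      have hadj : G.Adj p q := hCcl hpC hqC hpq
      obtain ⟨w, hwT, hwne⟩ := hT hadj
      have hwT' : w ∈ T := hwT
      have hwv : w ≠ v := fun h => hvT (h ▸ hwT')
      have hwC : w ∈ C := hmemC w hwv
      have hpw : p ≠ w := fun h => hpT (h ▸ hwT')
      have hqw : q ≠ w := fun h => hqT (h ▸ hwT')
      have e1 : G.dist p w = 1 := dist_eq_one_iff_adj (G := G).mpr (hCcl hpC hwC hpw)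
      have e2 : G.dist q w = 1 := dist_eq_one_iff_adj (G := G).mpr (hCcl hqC hwC hqw)
      exact hwne (e1.trans e2.symm)
  obtain ⟨S₀, hS₀gen, hS₀card⟩ := exists_gen_card_dim hG
  have hlow := hlower S₀ hS₀gen
  omega

end LMDAux

/-- A connected graph G of order n ≥ 3 has dim_l(G) = n - 2 iff ω(G) = n - 1. -/
theorem localMetricDim_eq_card_sub_two_iff {V : Type*} [Fintype V]
    (G : SimpleGraph V) (hG : G.Connected) (hn : 3 ≤ Fintype.card V) :
    localMetricDim G = Fintype.card V - 2 ↔ G.cliqueNum = Fintype.card V - 1 := by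
  constructor
  · exact LMDAux.forward hG hn
  · exact LMDAux.reverse hG hn
end

section
/- Every non-bipartite unicyclic connected graph has local metric dimension equal to 2. -/
open SimpleGraph

namespace LMDAux

variable {V : Type*}

/-- If the endpoints of a deleted edge remain reachable, every `G`-walk transfers to
reachability in the deleted graph. -/
lemma reach_del {G : SimpleGraph V} {a b : V}
    (hrab : (G.deleteEdges {s(a, b)}).Reachable a b) :
    ∀ {x y : V}, G.Walk x y → (G.deleteEdges {s(a, b)}).Reachable x y := by
  intro x y p
  induction p with
  | nil => rfl
  | @cons u w y h q ih =>
    by_cases he : s(u, w) = s(a, b)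
    · rw [Sym2.eq_iff] at he
      rcases he with ⟨rfl, rfl⟩ | ⟨rfl, rfl⟩
      · exact hrab.trans ih
      · exact hrab.symm.trans ih
    · exact (SimpleGraph.Adj.reachable (by simp [h, he])).trans ih

lemma connected_del {G : SimpleGraph V} {a b : V} (hG : G.Connected)
    (hrab : (G.deleteEdges {s(a, b)}).Reachable a b) :
    (G.deleteEdges {s(a, b)}).Connected := by
  haveI : Nonempty V := hG.nonempty
  refine SimpleGraph.Connected.mk fun x y => ?_
  obtain ⟨p⟩ := hG x y
  exact reach_del hrab p

lemma not_bridge_reachable {G : SimpleGraph V} {a b : V} {u : V} {c : G.Walk u u}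
    (hc : c.IsCycle) (he : s(a, b) ∈ c.edges) :
    (G.deleteEdges {s(a, b)}).Reachable a b := by
  have hadj : G.Adj a b := c.adj_of_mem_edges he
  by_contra hr
  have hbridge : G.IsBridge s(a, b) := SimpleGraph.isBridge_iff.mpr hr
  exact (SimpleGraph.isBridge_iff_adj_and_forall_cycle_notMem hadj).mp hbridge c hc he

/-- Any connected graph on a finite vertex type has at least `card V - 1` edges. -/
lemma card_le_of_connected [Fintype V] :
    ∀ (k : ℕ) (G : SimpleGraph V), G.edgeSet.ncard = k → G.Connected →
      Fintype.card V ≤ k + 1 := by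
  intro k
  induction k using Nat.strong_induction_on with
  | _ k IH =>
    intro G hk hconn
    by_cases hac : G.IsAcyclic
    · have ht : G.IsTree := ⟨hconn, hac⟩
      haveI : Fintype G.edgeSet := G.edgeSet.toFinite.fintype
      have h1 := ht.card_edgeFinset
      have h2 : G.edgeFinset.card = G.edgeSet.ncard := by
        rw [SimpleGraph.edgeFinset, Set.ncard_eq_toFinset_card']
      omega
    · rw [SimpleGraph.IsAcyclic] at hac
      push_neg at hac
      obtain ⟨u, c, hc⟩ := hac
      have hlen : c.edges ≠ [] := by
        have h3 := hc.three_le_length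
        intro h
        have : c.edges.length = 0 := by rw [h]; rfl
        rw [SimpleGraph.Walk.length_edges] at this
        omega
      obtain ⟨e, he⟩ := List.exists_mem_of_ne_nil _ hlen
      induction e using Sym2.ind with
      | _ a b =>
        have heG : s(a, b) ∈ G.edgeSet := c.edges_subset_edgeSet he
        have hrab := not_bridge_reachable hc he
        set T := G.deleteEdges {s(a, b)} with hT
        have hTconn : T.Connected := connected_del hconn hrab
        have hTedge : T.edgeSet = G.edgeSet \ {s(a, b)} := by
          rw [hT, SimpleGraph.edgeSet_deleteEdges]
        have hfin : G.edgeSet.Finite := G.edgeSet.toFinite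
        have hkpos : 1 ≤ k := by
          have : G.edgeSet.Nonempty := ⟨_, heG⟩
          have := Set.ncard_pos hfin |>.mpr this
          omega
        have hTcard : T.edgeSet.ncard = k - 1 := by
          rw [hTedge, Set.ncard_diff_singleton_of_mem heG, hk]
        have := IH (k - 1) (by omega) T hTcard hTconn
        omega

variable {H : SimpleGraph V}

/-- In a tree, the distance equals the length of any path. -/
lemma tree_dist_eq {u v : V} (hH : H.IsTree) {p : H.Walk u v} (hp : p.IsPath) :
    H.dist u v = p.length := by
  classical
  refine le_antisymm (SimpleGraph.dist_le p) ?_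
  obtain ⟨q, hq⟩ := hH.isConnected.exists_walk_length_eq_dist u v
  have huniq := hH.existsUnique_path u v
  obtain ⟨r, -, hr⟩ := huniq
  have h1 : p = q.bypass := (hr p hp).trans (hr q.bypass q.bypass_isPath).symm
  calc p.length = q.bypass.length := by rw [h1]
    _ ≤ q.length := q.length_bypass_le
    _ = H.dist u v := hq

/-- In a tree, distances to a fixed vertex from adjacent vertices differ by exactly one. -/
lemma tree_adj_dist (hH : H.IsTree) {u v : V} (h : H.Adj u v) (x : V) :
    H.dist u x = H.dist v x + 1 ∨ H.dist v x = H.dist u x + 1 := by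
  classical
  obtain ⟨p, hp, hpu⟩ := hH.existsUnique_path u x
  by_cases hv : v ∈ p.support
  · left
    have hspec := p.take_spec hv
    have htake : (p.takeUntil v hv).IsPath := hp.takeUntil hv
    have hdrop : (p.dropUntil v hv).IsPath := hp.dropUntil hv
    have hsing : (SimpleGraph.Path.singleton h : H.Walk u v).IsPath :=
      (SimpleGraph.Path.singleton h).2
    obtain ⟨r, -, hr⟩ := hH.existsUnique_path u v
    have h1 : p.takeUntil v hv = SimpleGraph.Path.singleton h :=
      (hr _ htake).trans (hr _ hsing).symm
    have hlen : (p.takeUntil v hv).length = 1 := by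
      rw [h1]; rfl
    have h2 : H.dist u x = p.length := tree_dist_eq hH hp
    have h3 : H.dist v x = (p.dropUntil v hv).length := tree_dist_eq hH hdrop
    have h4 : (p.takeUntil v hv).length + (p.dropUntil v hv).length = p.length := by
      rw [← SimpleGraph.Walk.length_append, hspec]
    omega
  · right
    have hcons : (SimpleGraph.Walk.cons h.symm p).IsPath := by
      rw [SimpleGraph.Walk.cons_isPath_iff]
      exact ⟨hp, hv⟩
    have h1 : H.dist v x = (SimpleGraph.Walk.cons h.symm p).length :=
      tree_dist_eq hH hcons
    have h2 : H.dist u x = p.length := tree_dist_eq hH hp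
    rw [SimpleGraph.Walk.length_cons] at h1
    omega

/-- Parity of walks in a tree. -/
lemma tree_walk_parity (hH : H.IsTree) {u v : V} (p : H.Walk u v) :
    (p.length + H.dist u v) % 2 = 0 := by
  induction p with
  | nil => simp [SimpleGraph.dist_self]
  | @cons u w v h q ih =>
    have := tree_adj_dist hH h v
    rw [SimpleGraph.Walk.length_cons]
    omega

lemma tree_dist_parity (hH : H.IsTree) (x a b : V) :
    (H.dist x a + H.dist x b + H.dist a b) % 2 = 0 := by
  obtain ⟨p, hp⟩ := hH.isConnected.exists_walk_length_eq_dist a x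
  obtain ⟨q, hq⟩ := hH.isConnected.exists_walk_length_eq_dist x b
  have h1 := tree_walk_parity hH (p.append q)
  rw [SimpleGraph.Walk.length_append, hp, hq] at h1
  have h2 : H.dist a x = H.dist x a := SimpleGraph.dist_comm
  omega

end LMDAux

open LMDAux in
/-- Every non-bipartite unicyclic connected graph (connected with exactly as many
edges as vertices) has local metric dimension 2. -/
theorem localMetricDim_unicyclic {V : Type*} [Fintype V] (G : SimpleGraph V)
    [DecidableRel G.Adj] (hG : G.Connected)
    (huni : G.edgeFinset.card = Fintype.card V) (hnb : ¬ G.Colorable 2) :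
    localMetricDim G = 2 := by
  classical
  have hncard : G.edgeSet.ncard = Fintype.card V := by
    rw [← huni, SimpleGraph.edgeFinset, Set.ncard_eq_toFinset_card']
  have hVpos : 0 < Fintype.card V := @Fintype.card_pos _ _ ⟨hG.nonempty.some⟩
  -- G is not acyclic
  have hnotac : ¬ G.IsAcyclic := by
    intro hac
    have ht : G.IsTree := ⟨hG, hac⟩
    have := ht.card_edgeFinset
    omega
  rw [SimpleGraph.IsAcyclic] at hnotac
  push_neg at hnotac
  obtain ⟨u, c, hc⟩ := hnotac
  have hlen : c.edges ≠ [] := by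
    have h3 := hc.three_le_length
    intro h
    have : c.edges.length = 0 := by rw [h]; rfl
    rw [SimpleGraph.Walk.length_edges] at this
    omega
  obtain ⟨e, he⟩ := List.exists_mem_of_ne_nil _ hlen
  induction e using Sym2.ind with
  | _ a b =>
  have heG : s(a, b) ∈ G.edgeSet := c.edges_subset_edgeSet he
  have hadj : G.Adj a b := heG
  have hab : a ≠ b := hadj.ne
  have hrab := not_bridge_reachable hc he
  set T := G.deleteEdges {s(a, b)} with hTdef
  have hTle : T ≤ G := SimpleGraph.deleteEdges_le _
  have hTconn : T.Connected := connected_del hG hrab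
  -- T is a tree
  have hTtree : T.IsTree := by
    refine ⟨hTconn, ?_⟩
    by_contra hac
    rw [SimpleGraph.IsAcyclic] at hac
    push_neg at hac
    obtain ⟨u2, c2, hc2⟩ := hac
    have hlen2 : c2.edges ≠ [] := by
      have h3 := hc2.three_le_length
      intro h
      have : c2.edges.length = 0 := by rw [h]; rfl
      rw [SimpleGraph.Walk.length_edges] at this
      omega
    obtain ⟨e2, he2⟩ := List.exists_mem_of_ne_nil _ hlen2
    induction e2 using Sym2.ind with
    | _ a2 b2 =>
    have he2T : s(a2, b2) ∈ T.edgeSet := c2.edges_subset_edgeSet he2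
    have hrab2 := not_bridge_reachable hc2 he2
    set T2 := T.deleteEdges {s(a2, b2)} with hT2def
    have hT2conn : T2.Connected := connected_del hTconn hrab2
    have hTedge : T.edgeSet = G.edgeSet \ {s(a, b)} := SimpleGraph.edgeSet_deleteEdges _
    have hT2edge : T2.edgeSet = T.edgeSet \ {s(a2, b2)} := SimpleGraph.edgeSet_deleteEdges _
    have hfinG : G.edgeSet.Finite := G.edgeSet.toFinite
    have hfinT : T.edgeSet.Finite := T.edgeSet.toFinite
    have hTcard : T.edgeSet.ncard = Fintype.card V - 1 := by
      rw [hTedge, Set.ncard_diff_singleton_of_mem heG, hncard]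
    have hT2card : T2.edgeSet.ncard = Fintype.card V - 2 := by
      rw [hT2edge, Set.ncard_diff_singleton_of_mem he2T, hTcard]
      omega
    have := card_le_of_connected (T2.edgeSet.ncard) T2 rfl hT2conn
    have hV2 : 2 ≤ Fintype.card V := by
      have hne2 : a2 ≠ b2 := (T.mem_edgeSet.mp he2T).ne
      haveI : Nontrivial V := ⟨⟨a2, b2, hne2⟩⟩
      exact Fintype.one_lt_card
    omega
  -- T-adjacency from G-adjacency
  have hTadj : ∀ {x y : V}, G.Adj x y → s(x, y) ≠ s(a, b) → T.Adj x y := by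
    intro x y h hne
    simp [hTdef, h, hne]
  -- the distance formula
  have hdistle : ∀ x y : V, G.dist x y ≤ T.dist x y := by
    intro x y
    obtain ⟨p, hp⟩ := hTconn.exists_walk_length_eq_dist x y
    have := SimpleGraph.dist_le (p.mapLe hTle)
    rwa [SimpleGraph.Walk.length_map, hp] at this
  have hdist2 : ∀ x y : V, G.dist x y ≤ T.dist x a + 1 + T.dist b y := by
    intro x y
    obtain ⟨p, hp⟩ := hTconn.exists_walk_length_eq_dist x a
    obtain ⟨q, hq⟩ := hTconn.exists_walk_length_eq_dist b y
    have := SimpleGraph.dist_le ((p.mapLe hTle).append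
      (SimpleGraph.Walk.cons hadj (q.mapLe hTle)))
    rw [SimpleGraph.Walk.length_append, SimpleGraph.Walk.length_cons,
      SimpleGraph.Walk.length_map, SimpleGraph.Walk.length_map, hp, hq] at this
    omega
  have hdist3 : ∀ x y : V, G.dist x y ≤ T.dist x b + 1 + T.dist a y := by
    intro x y
    obtain ⟨p, hp⟩ := hTconn.exists_walk_length_eq_dist x b
    obtain ⟨q, hq⟩ := hTconn.exists_walk_length_eq_dist a y
    have := SimpleGraph.dist_le ((p.mapLe hTle).append
      (SimpleGraph.Walk.cons hadj.symm (q.mapLe hTle)))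
    rw [SimpleGraph.Walk.length_append, SimpleGraph.Walk.length_cons,
      SimpleGraph.Walk.length_map, SimpleGraph.Walk.length_map, hp, hq] at this
    omega
  have hlb : ∀ {x y : V} (p : G.Walk x y),
      min (T.dist x y) (min (T.dist x a + 1 + T.dist b y) (T.dist x b + 1 + T.dist a y))
        ≤ p.length := by
    intro x y p
    induction p with
    | nil => simp [SimpleGraph.dist_self]
    | @cons x z y h q ih =>
      rw [SimpleGraph.Walk.length_cons]
      by_cases hezz : s(x, z) = s(a, b)
      · rw [Sym2.eq_iff] at hezz
        have hcomm : T.dist a b = T.dist b a := SimpleGraph.dist_comm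
        rcases hezz with ⟨rfl, rfl⟩ | ⟨rfl, rfl⟩
        · have h1 : T.dist x x = 0 := SimpleGraph.dist_self
          have h2 : T.dist z z = 0 := SimpleGraph.dist_self
          omega
        · have h1 : T.dist z z = 0 := SimpleGraph.dist_self
          have h2 : T.dist x x = 0 := SimpleGraph.dist_self
          omega
      · have hT : T.Adj x z := hTadj h hezz
        have ht1 : T.dist x y ≤ T.dist x z + T.dist z y := hTconn.dist_triangle
        have ht2 : T.dist x a ≤ T.dist x z + T.dist z a := hTconn.dist_triangle
        have ht3 : T.dist x b ≤ T.dist x z + T.dist z b := hTconn.dist_triangle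
        have hxz : T.dist x z = 1 := SimpleGraph.dist_eq_one_iff_adj.mpr hT
        omega
  have hkey : ∀ x y : V, G.dist x y =
      min (T.dist x y) (min (T.dist x a + 1 + T.dist b y) (T.dist x b + 1 + T.dist a y)) := by
    intro x y
    refine le_antisymm ?_ ?_
    · have := hdistle x y
      have := hdist2 x y
      have := hdist3 x y
      omega
    · obtain ⟨p, hp⟩ := hG.exists_walk_length_eq_dist x y
      rw [← hp]
      exact hlb p
  -- dist a b in T is even
  have hdabeven : T.dist a b % 2 = 0 := by
    by_contra hodd
    apply hnb
    refine ⟨SimpleGraph.Coloring.mk (fun x => ⟨T.dist x a % 2, by omega⟩) ?_⟩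
    intro x y hxy
    simp only [ne_eq, Fin.mk.injEq]
    by_cases hexy : s(x, y) = s(a, b)
    · rw [Sym2.eq_iff] at hexy
      have hcomm : T.dist b a = T.dist a b := SimpleGraph.dist_comm
      have h0 : T.dist a a = 0 := SimpleGraph.dist_self
      rcases hexy with ⟨rfl, rfl⟩ | ⟨rfl, rfl⟩ <;> omega
    · have hT := hTadj hxy hexy
      have := tree_adj_dist hTtree hT a
      omega
  -- the generator {a, b}
  have hgen : IsLocalMetricGenerator G ↑({a, b} : Finset V) := by
    intro x y hxy
    by_cases hexy : s(x, y) = s(a, b)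
    · refine ⟨a, by simp, ?_⟩
      rw [Sym2.eq_iff] at hexy
      have hpos : 0 < G.dist b a := hG.pos_dist_of_ne (Ne.symm hab)
      have h0 : G.dist a a = 0 := SimpleGraph.dist_self
      rcases hexy with ⟨rfl, rfl⟩ | ⟨rfl, rfl⟩ <;> omega
    · have hT := hTadj hxy hexy
      by_contra hcon
      push_neg at hcon
      have hea : G.dist x a = G.dist y a := hcon a (by simp)
      have heb : G.dist x b = G.dist y b := hcon b (by simp)
      have hka := hkey x a
      have hkb := hkey x b
      have hka' := hkey y a
      have hkb' := hkey y b
      have h0a : T.dist a a = 0 := SimpleGraph.dist_self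
      have h0b : T.dist b b = 0 := SimpleGraph.dist_self
      have hcomm : T.dist b a = T.dist a b := SimpleGraph.dist_comm
      have hA := tree_adj_dist hTtree hT a
      have hB := tree_adj_dist hTtree hT b
      have hp1 := tree_dist_parity hTtree x a b
      have hp2 := tree_dist_parity hTtree y a b
      omega
  -- assembling
  have h2mem : 2 ∈ {k | ∃ S : Finset V, IsLocalMetricGenerator G ↑S ∧ S.card = 2} := by
    exact ⟨{a, b}, hgen, Finset.card_pair hab⟩
  have hlow : ∀ k ∈ {k | ∃ S : Finset V, IsLocalMetricGenerator G ↑S ∧ S.card = k}, 2 ≤ k := by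
    rintro k ⟨S, hSgen, rfl⟩
    by_contra hk
    push_neg at hk
    have hSmem := hSgen hadj
    obtain ⟨w0, hw0S, -⟩ := hSmem
    have hS1 : S.card = 1 := by
      have : 0 < S.card := Finset.card_pos.mpr ⟨w0, hw0S⟩
      omega
    obtain ⟨w, hw⟩ := Finset.card_eq_one.mp hS1
    subst hw
    apply hnb
    refine ⟨SimpleGraph.Coloring.mk (fun x => ⟨G.dist x w % 2, by omega⟩) ?_⟩
    intro x y hxy
    simp only [ne_eq, Fin.mk.injEq]
    obtain ⟨w', hw', hne⟩ := hSgen hxy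
    have hw'w : w' = w := by simpa using hw'
    subst hw'w
    have ht1 : G.dist x w' ≤ G.dist x y + G.dist y w' := hG.dist_triangle
    have ht2 : G.dist y w' ≤ G.dist y x + G.dist x w' := hG.dist_triangle
    have hxy1 : G.dist x y = 1 := SimpleGraph.dist_eq_one_iff_adj.mpr hxy
    have hyx1 : G.dist y x = 1 := SimpleGraph.dist_eq_one_iff_adj.mpr hxy.symm
    omega
  exact le_antisymm (Nat.sInf_le h2mem) (le_csInf ⟨2, h2mem⟩ hlow)
end

section
/- Let H be a connected graph of order n′ with clique number ω(H) = n′−1. Then every vertex of H belongs to some local metric basis of H. -/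
open SimpleGraph

/-- If H is a connected graph of order n' with clique number n' - 1, then every
vertex of H belongs to some local metric basis of H. -/
theorem mem_localMetricBasis_of_cliqueNum {V : Type*} [Fintype V]
    (H : SimpleGraph V) (hH : H.Connected)
    (hclique : H.cliqueNum = Fintype.card V - 1) :
    ∀ v : V, ∃ B : Finset V, IsLocalMetricBasis H B ∧ v ∈ B := by
  classical
  intro v
  have hVne : Nonempty V := hH.nonempty
  set n := Fintype.card V with hn
  have hn1 : 1 ≤ n := Fintype.card_pos
  -- the big clique
  obtain ⟨K, hK⟩ := H.exists_isNClique_cliqueNum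
  rw [hclique] at hK
  have hKcard : K.card = n - 1 := hK.2
  have hbdd : BddAbove {m | ∃ s : Finset V, H.IsNClique m s} := by
    refine ⟨n, ?_⟩
    rintro m ⟨s, hs⟩
    rw [← hs.2]
    exact s.card_le_univ.trans_eq (by simp [hn])
  -- the vertex outside K
  have hcompl : (Finset.univ \ K).card = 1 := by
    rw [Finset.card_sdiff_of_subset (Finset.subset_univ K)]
    simp only [Finset.card_univ, ← hn, hKcard]
    omega
  obtain ⟨u, hu⟩ := Finset.card_eq_one.mp hcompl
  have hnotK : ∀ x : V, x ∉ K ↔ x = u := by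
    intro x
    rw [← Finset.mem_singleton, ← hu]
    simp
  have hmemK : ∀ x : V, x ∈ K ↔ x ≠ u := by
    intro x
    rw [← not_iff_not, not_not, hnotK]
  have huK : u ∉ K := (hnotK u).mpr rfl
  -- all vertices distinct from u are pairwise adjacent
  have hadjK : ∀ x y : V, x ≠ u → y ≠ u → x ≠ y → H.Adj x y := by
    intro x y hx hy hxy
    exact hK.1 (by simpa using (hmemK x).mpr hx) (by simpa using (hmemK y).mpr hy) hxy
  -- u has a non-neighbor distinct from itself
  have hbex : ∃ b : V, b ≠ u ∧ ¬ H.Adj u b := by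
    by_contra hc
    push_neg at hc
    have huniv : H.IsNClique n Finset.univ := by
      constructor
      · intro x hx y hy hxy
        by_cases hxu : x = u
        · have hyu : y ≠ u := fun h => hxy (hxu.trans h.symm)
          rw [hxu]
          exact hc y hyu
        · by_cases hyu : y = u
          · rw [hyu]
            exact (hc x hxu).symm
          · exact hadjK x y hxu hyu hxy
      · simp [hn]
    have : n ≤ H.cliqueNum := le_csSup hbdd ⟨Finset.univ, huniv⟩
    rw [hclique] at this
    omega
  obtain ⟨b, hbu, hbadj⟩ := hbex
  have hn2 : 2 ≤ n := by
    have : ({u, b} : Finset V).card ≤ n := by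
      simpa [hn] using Finset.card_le_univ ({u, b} : Finset V)
    rwa [Finset.card_insert_of_notMem (by simp [hbu.symm]), Finset.card_singleton] at this
  -- u has a neighbor
  have haex : ∃ a : V, H.Adj u a := by
    obtain ⟨p⟩ := hH.preconnected u b
    cases p with
    | nil => exact absurd rfl hbu
    | cons h _ => exact ⟨_, h⟩
  obtain ⟨a, hadj⟩ := haex
  have hau : a ≠ u := fun h => H.irrefl (h ▸ hadj)
  have hab : a ≠ b := fun h => hbadj (h ▸ hadj)
  have hn3 : 3 ≤ n := by
    have : ({a, b} : Finset V).card ≤ K.card := by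
      apply Finset.card_le_card
      intro x hx
      rcases Finset.mem_insert.mp hx with h | h
      · rw [h]; exact (hmemK a).mpr hau
      · rw [Finset.mem_singleton] at h; rw [h]; exact (hmemK b).mpr hbu
    rw [Finset.card_insert_of_notMem (by simp [hab]), Finset.card_singleton, hKcard] at this
    omega
  -- distance facts
  have hcomm : ∀ p q : V, H.dist p q = H.dist q p := fun p q => SimpleGraph.dist_comm
  have hd1 : ∀ {x y : V}, H.Adj x y → H.dist x y = 1 := fun h =>
    dist_eq_one_iff_adj.mpr h
  have hd2 : ∀ x : V, x ≠ u → ¬ H.Adj u x → H.dist u x = 2 := by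
    intro x hxu hxadj
    have hax : a ≠ x := fun h => hxadj (h ▸ hadj)
    have hle : H.dist u x ≤ 2 := by
      calc H.dist u x ≤ H.dist u a + H.dist a x := hH.dist_triangle
        _ = 2 := by rw [hd1 hadj, hd1 (hadjK a x hau hxu hax)]
    have hpos : 0 < H.dist u x := hH.pos_dist_of_ne (Ne.symm hxu)
    have hne1 : H.dist u x ≠ 1 := fun h => hxadj (dist_eq_one_iff_adj.mp h)
    omega
  have hdK : ∀ x y : V, x ≠ u → y ≠ u → x ≠ y → H.dist x y = 1 := by
    intro x y hx hy hxy; exact hd1 (hadjK x y hx hy hxy)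
  -- First family of generators : K minus one vertex
  have genA : ∀ c : V, c ∈ K → IsLocalMetricGenerator H ↑(K.erase c) := by
    intro c hc x y hxy
    have hxyne : x ≠ y := hxy.ne
    by_cases hxu : x = u
    · have hyu : y ≠ u := fun h => H.irrefl (by rw [hxu, h] at hxy; exact hxy)
      have hxy' : H.Adj u y := by rw [← hxu]; exact hxy
      by_cases hyc : y = c
      · -- use b
        have hbyne : b ≠ y := fun h => hbadj (by rw [h]; exact hxy')
        have hbc : b ≠ c := hyc ▸ hbyne
        have e1 : H.dist x b = 2 := by rw [hxu]; exact hd2 b hbu hbadj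
        have e2 : H.dist y b = 1 := hdK y b hyu hbu (Ne.symm hbyne)
        exact ⟨b, by simp [Finset.mem_erase, hbc, (hmemK b).mpr hbu], by omega⟩
      · have e1 : H.dist x y = 1 := hd1 hxy
        have e2 : H.dist y y = 0 := SimpleGraph.dist_self
        exact ⟨y, by simp [Finset.mem_erase, hyc, (hmemK y).mpr hyu], by omega⟩
    · by_cases hyu : y = u
      · have hxy' : H.Adj u x := by rw [← hyu]; exact hxy.symm
        by_cases hxc : x = c
        · have hbxne : b ≠ x := fun h => hbadj (by rw [h]; exact hxy')
          have hbc : b ≠ c := hxc ▸ hbxne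
          have e1 : H.dist x b = 1 := hdK x b hxu hbu (Ne.symm hbxne)
          have e2 : H.dist y b = 2 := by rw [hyu]; exact hd2 b hbu hbadj
          exact ⟨b, by simp [Finset.mem_erase, hbc, (hmemK b).mpr hbu], by omega⟩
        · have e1 : H.dist x x = 0 := SimpleGraph.dist_self
          have e2 : H.dist y x = 1 := hd1 hxy.symm
          exact ⟨x, by simp [Finset.mem_erase, hxc, (hmemK x).mpr hxu], by omega⟩
      · -- both in K
        by_cases hxc : x = c
        · have hyc : y ≠ c := fun h => hxyne (hxc.trans h.symm)
          have e1 : H.dist x y = 1 := hdK x y hxu hyu hxyne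
          have e2 : H.dist y y = 0 := SimpleGraph.dist_self
          exact ⟨y, by simp [Finset.mem_erase, hyc, (hmemK y).mpr hyu], by omega⟩
        · have e1 : H.dist x x = 0 := SimpleGraph.dist_self
          have e2 : H.dist y x = 1 := hd1 hxy.symm
          exact ⟨x, by simp [Finset.mem_erase, hxc, (hmemK x).mpr hxu], by omega⟩
  -- Second generator : containing u
  have genB : IsLocalMetricGenerator H ↑(insert u ((K.erase a).erase b)) := by
    intro x y hxy
    have hxyne : x ≠ y := hxy.ne
    by_cases hxu : x = u
    · have hyu : y ≠ u := fun h => H.irrefl (by rw [hxu, h] at hxy; exact hxy)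
      have e1 : H.dist x u = 0 := by rw [hxu]; exact SimpleGraph.dist_self
      have e2 : 0 < H.dist y u := hH.pos_dist_of_ne hyu
      exact ⟨u, by simp, by omega⟩
    · by_cases hyu : y = u
      · have e1 : 0 < H.dist x u := hH.pos_dist_of_ne hxu
        have e2 : H.dist y u = 0 := by rw [hyu]; exact SimpleGraph.dist_self
        exact ⟨u, by simp, by omega⟩
      · by_cases hxB : x = a ∨ x = b
        · by_cases hyB : y = a ∨ y = b
          · -- {x, y} = {a, b}, use u
            have hcross : (x = a ∧ y = b) ∨ (x = b ∧ y = a) := by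
              rcases hxB with h | h <;> rcases hyB with h' | h' <;>
                first
                  | (exact absurd (h.trans h'.symm) hxyne)
                  | (exact Or.inl ⟨h, h'⟩)
                  | (exact Or.inr ⟨h, h'⟩)
            rcases hcross with ⟨h1, h2⟩ | ⟨h1, h2⟩
            · have e1 : H.dist x u = 1 := by
                rw [hcomm x u, h1]; exact hd1 hadj
              have e2 : H.dist y u = 2 := by
                rw [hcomm y u, h2]; exact hd2 b hbu hbadj
              exact ⟨u, by simp, by omega⟩
            · have e1 : H.dist x u = 2 := by
                rw [hcomm x u, h1]; exact hd2 b hbu hbadj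
              have e2 : H.dist y u = 1 := by
                rw [hcomm y u, h2]; exact hd1 hadj
              exact ⟨u, by simp, by omega⟩
          · push_neg at hyB
            have e1 : H.dist x y = 1 := hdK x y hxu hyu hxyne
            have e2 : H.dist y y = 0 := SimpleGraph.dist_self
            refine ⟨y, ?_, by omega⟩
            simp [Finset.mem_erase, hyB.1, hyB.2, (hmemK y).mpr hyu]
        · push_neg at hxB
          have e1 : H.dist x x = 0 := SimpleGraph.dist_self
          have e2 : H.dist y x = 1 := hd1 hxy.symm
          refine ⟨x, ?_, by omega⟩
          simp [Finset.mem_erase, hxB.1, hxB.2, (hmemK x).mpr hxu]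
  -- Lower bound : every generator has at least n - 2 elements
  have hlow : ∀ S : Finset V, IsLocalMetricGenerator H ↑S → n - 2 ≤ S.card := by
    intro S hS
    -- two clique vertices in the same "class" cannot both be missing
    have hsame : ∀ x y : V, x ∉ S → y ∉ S → x ≠ u → y ≠ u → x ≠ y →
        (H.Adj u x ↔ H.Adj u y) → False := by
      intro x y hxS hyS hxu hyu hxy hcls
      obtain ⟨w, hwS, hwd⟩ := hS (hadjK x y hxu hyu hxy)
      rw [Finset.mem_coe] at hwS
      have hwx : w ≠ x := fun h => hxS (h ▸ hwS)
      have hwy : w ≠ y := fun h => hyS (h ▸ hwS)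
      by_cases hwu : w = u
      · by_cases hx : H.Adj u x
        · have e1 : H.dist x w = 1 := by rw [hwu, hcomm x u]; exact hd1 hx
          have e2 : H.dist y w = 1 := by rw [hwu, hcomm y u]; exact hd1 (hcls.mp hx)
          exact hwd (e1.trans e2.symm)
        · have e1 : H.dist x w = 2 := by rw [hwu, hcomm x u]; exact hd2 x hxu hx
          have e2 : H.dist y w = 2 := by
            rw [hwu, hcomm y u]; exact hd2 y hyu (fun h => hx (hcls.mpr h))
          exact hwd (e1.trans e2.symm)
      · exact hwd ((hdK x w hxu hwu (Ne.symm hwx)).trans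
          (hdK y w hyu hwu (Ne.symm hwy)).symm)
    -- a missing cross pair forces u ∈ S
    have hcross : ∀ x y : V, x ∉ S → y ∉ S → x ≠ u → y ≠ u →
        H.Adj u x → ¬ H.Adj u y → u ∈ S := by
      intro x y hxS hyS hxu hyu hx hy
      by_contra huS
      have hxy : x ≠ y := fun h => hy (h ▸ hx)
      obtain ⟨w, hwS, hwd⟩ := hS (hadjK x y hxu hyu hxy)
      rw [Finset.mem_coe] at hwS
      have hwx : w ≠ x := fun h => hxS (h ▸ hwS)
      have hwy : w ≠ y := fun h => hyS (h ▸ hwS)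
      have hwu : w ≠ u := fun h => huS (h ▸ hwS)
      exact hwd ((hdK x w hxu hwu (Ne.symm hwx)).trans
        (hdK y w hyu hwu (Ne.symm hwy)).symm)
    -- the complement of S has at most two elements
    have hcompl2 : (Finset.univ \ S).card ≤ 2 := by
      by_contra hcc
      push_neg at hcc
      obtain ⟨t₁, t₂, t₃, ht₁, ht₂, ht₃, h12, h13, h23⟩ :=
        Finset.two_lt_card_iff.mp hcc
      have ht₁S : t₁ ∉ S := (Finset.mem_sdiff.mp ht₁).2
      have ht₂S : t₂ ∉ S := (Finset.mem_sdiff.mp ht₂).2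
      have ht₃S : t₃ ∉ S := (Finset.mem_sdiff.mp ht₃).2
      have key : ∀ x y : V, x ∉ S → y ∉ S → x ≠ u → y ≠ u → x ≠ y → u ∉ S → False := by
        intro x y hxS hyS hxu hyu hxy huS
        by_cases hx : H.Adj u x
        · by_cases hy : H.Adj u y
          · exact hsame x y hxS hyS hxu hyu hxy (iff_of_true hx hy)
          · exact huS (hcross x y hxS hyS hxu hyu hx hy)
        · by_cases hy : H.Adj u y
          · exact huS (hcross y x hyS hxS hyu hxu hy hx)
          · exact hsame x y hxS hyS hxu hyu hxy (iff_of_false hx hy)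
      by_cases h1u : t₁ = u
      · exact key t₂ t₃ ht₂S ht₃S (fun h => h12 (h1u.trans h.symm))
          (fun h => h13 (h1u.trans h.symm)) h23 (h1u ▸ ht₁S)
      · by_cases h2u : t₂ = u
        · exact key t₁ t₃ ht₁S ht₃S h1u (fun h => h23 (h2u.trans h.symm)) h13 (h2u ▸ ht₂S)
        · by_cases h3u : t₃ = u
          · exact key t₁ t₂ ht₁S ht₂S h1u h2u h12 (h3u ▸ ht₃S)
          · by_cases hx1 : H.Adj u t₁
            · by_cases hx2 : H.Adj u t₂
              · exact hsame t₁ t₂ ht₁S ht₂S h1u h2u h12 (iff_of_true hx1 hx2)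
              · by_cases hx3 : H.Adj u t₃
                · exact hsame t₁ t₃ ht₁S ht₃S h1u h3u h13 (iff_of_true hx1 hx3)
                · exact hsame t₂ t₃ ht₂S ht₃S h2u h3u h23 (iff_of_false hx2 hx3)
            · by_cases hx2 : H.Adj u t₂
              · by_cases hx3 : H.Adj u t₃
                · exact hsame t₂ t₃ ht₂S ht₃S h2u h3u h23 (iff_of_true hx2 hx3)
                · exact hsame t₁ t₃ ht₁S ht₃S h1u h3u h13 (iff_of_false hx1 hx3)
              · exact hsame t₁ t₂ ht₁S ht₂S h1u h2u h12 (iff_of_false hx1 hx2)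
    have hadd := Finset.card_sdiff_add_card_eq_card (Finset.subset_univ S)
    have hcu : (Finset.univ : Finset V).card = n := by simp [hn]
    omega
  -- the value n - 2 is attained
  have haK : a ∈ K := (hmemK a).mpr hau
  have hbK : b ∈ K := (hmemK b).mpr hbu
  have hcardA : ∀ c : V, c ∈ K → (K.erase c).card = n - 2 := by
    intro c hc
    rw [Finset.card_erase_of_mem hc, hKcard]
    omega
  have hmemset : n - 2 ∈ {k | ∃ S : Finset V, IsLocalMetricGenerator H ↑S ∧ S.card = k} :=
    ⟨K.erase a, genA a haK, hcardA a haK⟩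
  have hdim : localMetricDim H = n - 2 := by
    refine le_antisymm (Nat.sInf_le hmemset) (le_csInf ⟨_, hmemset⟩ ?_)
    rintro k ⟨S, hSgen, rfl⟩
    exact hlow S hSgen
  by_cases hvu : v = u
  · -- use the generator containing u
    refine ⟨insert u ((K.erase a).erase b), ⟨genB, ?_⟩, by simp [hvu]⟩
    rw [hdim]
    have hbea : b ∈ K.erase a := Finset.mem_erase.mpr ⟨hab.symm, hbK⟩
    have hune : u ∉ (K.erase a).erase b := fun h =>
      huK (Finset.mem_of_mem_erase (Finset.mem_of_mem_erase h))
    rw [Finset.card_insert_of_notMem hune, Finset.card_erase_of_mem hbea,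
      Finset.card_erase_of_mem haK, hKcard]
    omega
  · -- v ∈ K ; remove some other vertex of K
    have hvK : v ∈ K := (hmemK v).mpr hvu
    have hK2 : 1 < K.card := by rw [hKcard]; omega
    obtain ⟨c, hcK, hcv⟩ := Finset.exists_mem_ne hK2 v
    refine ⟨K.erase c, ⟨genA c hcK, by rw [hcardA c hcK, hdim]⟩, ?_⟩
    exact Finset.mem_erase.mpr ⟨Ne.symm hcv, hvK⟩
end

section
/- Let H be a connected non-bipartite graph with root v, and G a connected graph of order n ≥ 2. If v does not belong to any local metric basis of H, then dim_l(G∘_v H) = n·dim_l(H). -/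
open SimpleGraph

/-- The rooted product G ∘_v H: a copy of H is attached at its root v to each
vertex of G. Vertex (g, v) plays the role of the g-th vertex of G. -/
def rootedProd {V W : Type*} (G : SimpleGraph V) (H : SimpleGraph W) (v : W) :
    SimpleGraph (V × W) :=
  SimpleGraph.fromRel (fun a b =>
    (a.1 = b.1 ∧ H.Adj a.2 b.2) ∨ (a.2 = v ∧ b.2 = v ∧ G.Adj a.1 b.1))

namespace RootedAux

variable {V W : Type*} (G : SimpleGraph V) (H : SimpleGraph W) (v : W)

lemma rootedProd_adj {a b : V × W} :
    (rootedProd G H v).Adj a b ↔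
      (a.1 = b.1 ∧ H.Adj a.2 b.2) ∨ (a.2 = v ∧ b.2 = v ∧ G.Adj a.1 b.1) := by
  unfold rootedProd
  rw [SimpleGraph.fromRel_adj]
  constructor
  · rintro ⟨hne, (⟨h1, h2⟩ | ⟨h1, h2, h3⟩) | (⟨h1, h2⟩ | ⟨h1, h2, h3⟩)⟩
    · exact Or.inl ⟨h1, h2⟩
    · exact Or.inr ⟨h1, h2, h3⟩
    · exact Or.inl ⟨h1.symm, h2.symm⟩
    · exact Or.inr ⟨h2, h1, h3.symm⟩
  · rintro (⟨h1, h2⟩ | ⟨h1, h2, h3⟩)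
    · exact ⟨fun h => h2.ne (congrArg Prod.snd h), Or.inl (Or.inl ⟨h1, h2⟩)⟩
    · exact ⟨fun h => h3.ne (congrArg Prod.fst h), Or.inl (Or.inr ⟨h1, h2, h3⟩)⟩

/-- The copy embedding hom. -/
def copyHom (i : V) : H →g rootedProd G H v where
  toFun x := (i, x)
  map_rel' h := (rootedProd_adj G H v).mpr (Or.inl ⟨rfl, h⟩)

/-- The root embedding hom. -/
def rootHom : G →g rootedProd G H v where
  toFun j := (j, v)
  map_rel' h := (rootedProd_adj G H v).mpr (Or.inr ⟨rfl, rfl, h⟩)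

open Classical in
noncomputable def D : V × W → V × W → ℕ := fun a b =>
  if a.1 = b.1 then H.dist a.2 b.2 else H.dist a.2 v + G.dist a.1 b.1 + H.dist v b.2

lemma D_self (a : V × W) : D G H v a a = 0 := by simp [D]

lemma D_same (i : V) (x y : W) : D G H v (i, x) (i, y) = H.dist x y := by
  simp [D]

lemma D_diff {i j : V} (hij : i ≠ j) (x y : W) :
    D G H v (i, x) (j, y) = H.dist x v + G.dist i j + H.dist v y := by
  simp [D, hij]

lemma D_root (l k : V) (z : W) :
    D G H v (l, v) (k, z) = G.dist l k + H.dist v z := by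
  by_cases h : l = k
  · subst h; simp [D, SimpleGraph.dist_self]
  · simp [D, h, SimpleGraph.dist_self]

lemma exists_walk_D (hG : G.Connected) (hH : H.Connected) (a b : V × W) :
    ∃ p : (rootedProd G H v).Walk a b, p.length = D G H v a b := by
  obtain ⟨i, x⟩ := a; obtain ⟨j, y⟩ := b
  by_cases hij : i = j
  · subst hij
    obtain ⟨p, hp⟩ := hH.exists_walk_length_eq_dist x y
    exact ⟨p.map (copyHom G H v i), by
      simp [D, hp]
      exact (SimpleGraph.Walk.length_map (copyHom G H v i) p).trans hp⟩
  · obtain ⟨p1, hp1⟩ := hH.exists_walk_length_eq_dist x v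
    obtain ⟨pg, hpg⟩ := hG.exists_walk_length_eq_dist i j
    obtain ⟨p2, hp2⟩ := hH.exists_walk_length_eq_dist v y
    refine ⟨(p1.map (copyHom G H v i)).append
      ((pg.map (rootHom G H v)).append (p2.map (copyHom G H v j))), ?_⟩
    simp [D, hij, hp1, hpg, hp2]
    have e1 := SimpleGraph.Walk.length_map (copyHom G H v i) p1
    have e2 := SimpleGraph.Walk.length_map (rootHom G H v) pg
    have e3 := SimpleGraph.Walk.length_map (copyHom G H v j) p2
    have e4 := SimpleGraph.Walk.length_append (p1.map (copyHom G H v i))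
      ((pg.map (rootHom G H v)).append (p2.map (copyHom G H v j)))
    have e5 := SimpleGraph.Walk.length_append (pg.map (rootHom G H v)) (p2.map (copyHom G H v j))
    exact e4.trans ((congrArg (fun t => (p1.map (copyHom G H v i)).length + t) e5).trans
      (by
        have key : ∀ a b c : ℕ, a = H.dist x v → b = G.dist i j → c = H.dist v y →
            a + (b + c) = H.dist x v + G.dist i j + H.dist v y := by intros; omega
        exact key _ _ _ (e1.trans hp1) (e2.trans hpg) (e3.trans hp2)))

lemma D_lipschitz (hG : G.Connected) (hH : H.Connected) {a b : V × W}
    (hab : (rootedProd G H v).Adj a b) (c : V × W) :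
    D G H v a c ≤ D G H v b c + 1 := by
  obtain ⟨i, x⟩ := a; obtain ⟨j, y⟩ := b; obtain ⟨k, z⟩ := c
  rcases (rootedProd_adj G H v).mp hab with ⟨hij, hxy⟩ | ⟨hx, hy, hij⟩
  · replace hij : i = j := hij
    replace hxy : H.Adj x y := hxy
    subst hij
    have h1 : H.dist x y = 1 := dist_eq_one_iff_adj.mpr hxy
    have htri : H.dist x z ≤ H.dist x y + H.dist y z := hH.dist_triangle
    have htri2 : H.dist x v ≤ H.dist x y + H.dist y v := hH.dist_triangle
    by_cases hk : i = k
    · subst hk; rw [D_same, D_same]; omega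
    · rw [D_diff G H v hk, D_diff G H v hk]; omega
  · replace hx : x = v := hx
    replace hy : y = v := hy
    replace hij : G.Adj i j := hij
    rw [hx, hy, D_root, D_root]
    have h1 : G.dist i j = 1 := dist_eq_one_iff_adj.mpr hij
    have htri : G.dist i k ≤ G.dist i j + G.dist j k := hG.dist_triangle
    omega

lemma dist_eq_D (hG : G.Connected) (hH : H.Connected) (a b : V × W) :
    (rootedProd G H v).dist a b = D G H v a b := by
  obtain ⟨p, hp⟩ := exists_walk_D G H v hG hH a b
  refine le_antisymm (hp ▸ SimpleGraph.dist_le p) ?_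
  obtain ⟨q, hq⟩ := p.reachable.exists_walk_length_eq_dist
  rw [← hq]
  clear hp hq p
  induction q with
  | nil => simpa using (D_self G H v _).le
  | cons h q ih =>
    calc D G H v _ _ ≤ D G H v _ _ + 1 := D_lipschitz G H v hG hH h _
    _ ≤ q.length + 1 := by omega
    _ = _ := by simp [SimpleGraph.Walk.length_cons]

lemma dist_same (hG : G.Connected) (hH : H.Connected) (i : V) (x y : W) :
    (rootedProd G H v).dist (i, x) (i, y) = H.dist x y := by
  rw [dist_eq_D G H v hG hH, D_same]

lemma dist_diff (hG : G.Connected) (hH : H.Connected) {i j : V} (hij : i ≠ j) (x y : W) :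
    (rootedProd G H v).dist (i, x) (j, y) = H.dist x v + G.dist i j + H.dist v y := by
  rw [dist_eq_D G H v hG hH, D_diff G H v hij]

lemma univ_gen {α : Type*} [Fintype α] (G : SimpleGraph α) :
    IsLocalMetricGenerator G ↑(Finset.univ : Finset α) := by
  intro u w h
  refine ⟨u, by simp, ?_⟩
  rw [SimpleGraph.dist_self]
  have : G.dist w u ≠ 0 :=
    SimpleGraph.dist_ne_zero_iff_ne_and_reachable.mpr ⟨h.ne.symm, h.symm.reachable⟩
  omega

lemma dim_le_of_gen {α : Type*} [Fintype α] {G : SimpleGraph α} {S : Finset α}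
    (h : IsLocalMetricGenerator G ↑S) : localMetricDim G ≤ S.card :=
  Nat.sInf_le ⟨S, h, rfl⟩

lemma exists_basis {α : Type*} [Fintype α] (G : SimpleGraph α) :
    ∃ B : Finset α, IsLocalMetricBasis G B := by
  have hne : {k | ∃ S : Finset α, IsLocalMetricGenerator G ↑S ∧ S.card = k}.Nonempty :=
    ⟨_, Finset.univ, univ_gen G, rfl⟩
  obtain ⟨S, hS, hcard⟩ := Nat.sInf_mem hne
  exact ⟨S, hS, hcard⟩

lemma exists_adj {α : Type*} (H : SimpleGraph α) (hnb : ¬ H.Colorable 2) :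
    ∃ x y, H.Adj x y := by
  by_contra h
  push_neg at h
  exact hnb ⟨SimpleGraph.Coloring.mk (fun _ => (0 : Fin 2))
    (fun {x y} hxy => absurd hxy (h x y))⟩

end RootedAux

/-- If the root v belongs to no local metric basis of the connected non-bipartite
graph H, then dim_l(G ∘_v H) = n · dim_l(H). -/
theorem localMetricDim_rootedProd_of_root_not_mem {V W : Type*} [Fintype V] [Fintype W]
    (G : SimpleGraph V) (H : SimpleGraph W) (v : W) (hG : G.Connected) (hH : H.Connected)
    (hnb : ¬ H.Colorable 2) (hn : 2 ≤ Fintype.card V)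
    (hv : ∀ B : Finset W, IsLocalMetricBasis H B → v ∉ B) :
    localMetricDim (rootedProd G H v) = Fintype.card V * localMetricDim H := by
  classical
  open RootedAux in
  set m := localMetricDim H with hm
  obtain ⟨B, hBgen, hBcard⟩ := RootedAux.exists_basis H
  have hBne : B.Nonempty := by
    obtain ⟨x, y, hxy⟩ := RootedAux.exists_adj H hnb
    obtain ⟨w, hw, -⟩ := hBgen hxy
    exact ⟨w, hw⟩
  have hub : localMetricDim (rootedProd G H v) ≤ Fintype.card V * m := by
    have hgen : IsLocalMetricGenerator (rootedProd G H v)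
        ↑((Finset.univ : Finset V) ×ˢ B) := by
      rintro ⟨i, x⟩ ⟨j, y⟩ hadj
      rcases (RootedAux.rootedProd_adj G H v).mp hadj with ⟨hij, hxy⟩ | ⟨hx, hy, hij⟩
      · replace hij : i = j := hij
        replace hxy : H.Adj x y := hxy
        subst hij
        obtain ⟨b, hb, hd⟩ := hBgen hxy
        refine ⟨(i, b), by simp [hb], ?_⟩
        rwa [RootedAux.dist_same G H v hG hH, RootedAux.dist_same G H v hG hH]
      · replace hx : x = v := hx
        replace hy : y = v := hy
        replace hij : G.Adj i j := hij
        obtain ⟨b, hb⟩ := hBne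
        refine ⟨(i, b), by simp [hb], ?_⟩
        rw [hx, hy, RootedAux.dist_same G H v hG hH,
          RootedAux.dist_diff G H v hG hH (Ne.symm hij.ne) v b,
          SimpleGraph.dist_self]
        have : 0 < G.dist j i := hG.pos_dist_of_ne (Ne.symm hij.ne)
        omega
    calc localMetricDim (rootedProd G H v) ≤ ((Finset.univ : Finset V) ×ˢ B).card :=
        RootedAux.dim_le_of_gen hgen
    _ = Fintype.card V * m := by
        rw [Finset.card_product, hBcard]; simp [hm]
  have hlb : Fintype.card V * m ≤ localMetricDim (rootedProd G H v) := by
    obtain ⟨S, hSgen, hScard⟩ := RootedAux.exists_basis (rootedProd G H v)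
    rw [← hScard]
    have key : ∀ i : V, m ≤ (S.filter (fun a => a.1 = i)).card := by
      intro i
      set Si := S.filter (fun a => a.1 = i) with hSi
      set Ti := Si.image Prod.snd with hTi
      have hTicard : Ti.card = Si.card := Finset.card_image_of_injOn (by
        intro a ha b hb hab
        have ha' : a.1 = i := (Finset.mem_filter.mp ha).2
        have hb' : b.1 = i := (Finset.mem_filter.mp hb).2
        exact Prod.ext (ha'.trans hb'.symm) hab)
      have hgen' : IsLocalMetricGenerator H ↑(insert v Ti) := by
        intro x y hxy
        obtain ⟨⟨j, b⟩, hjb, hd⟩ := hSgen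
          (show (rootedProd G H v).Adj (i, x) (i, y) from
            (RootedAux.rootedProd_adj G H v).mpr (Or.inl ⟨rfl, hxy⟩))
        by_cases hji : j = i
        · subst hji
          refine ⟨b, ?_, ?_⟩
          · have : (j, b) ∈ Si := Finset.mem_filter.mpr ⟨by exact_mod_cast hjb, rfl⟩
            simp only [Finset.coe_insert, Set.mem_insert_iff]
            exact Or.inr (Finset.mem_image.mpr ⟨(j, b), this, rfl⟩)
          · rwa [RootedAux.dist_same G H v hG hH, RootedAux.dist_same G H v hG hH] at hd
        · refine ⟨v, by simp, ?_⟩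
          rw [RootedAux.dist_diff G H v hG hH (Ne.symm hji) x b,
            RootedAux.dist_diff G H v hG hH (Ne.symm hji) y b] at hd
          omega
      by_contra hlt
      push_neg at hlt
      have h1 : m ≤ (insert v Ti).card := RootedAux.dim_le_of_gen hgen'
      have hvTi : v ∉ Ti := by
        intro hvt
        rw [Finset.insert_eq_self.mpr hvt, hTicard] at h1
        omega
      have hcard : (insert v Ti).card = m := by
        rw [Finset.card_insert_of_notMem hvTi, hTicard] at h1 ⊢
        omega
      exact hv _ ⟨hgen', hcard⟩ (Finset.mem_insert_self v Ti)
    have hfib : S.card = ∑ i : V, (S.filter (fun a => a.1 = i)).card :=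
      Finset.card_eq_sum_card_fiberwise (f := Prod.fst) (t := Finset.univ) (by simp)
    rw [hfib]
    calc Fintype.card V * m = ∑ _i : V, m := by simp [mul_comm]
    _ ≤ ∑ i : V, (S.filter (fun a => a.1 = i)).card :=
        Finset.sum_le_sum (fun i _ => key i)
  exact le_antisymm hub hlb
end

section
/- Let G be a connected graph of order n ≥ 2, H a connected non-bipartite graph of order n′, and v ∈ V(H). Then n ≤ dim_l(G∘_v H) ≤ n(n′−2). -/
open SimpleGraph

section Aux

variable {V W : Type*} (G : SimpleGraph V) (H : SimpleGraph W) (v : W)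

/-- Embedding of the `g`-th copy of `H` into the rooted product. -/
def copyHom (g : V) : H →g rootedProd G H v where
  toFun w := (g, w)
  map_rel' := by
    intro a b hab
    rw [rootedProd, fromRel_adj]
    exact ⟨by simp [Prod.ext_iff, hab.ne], Or.inl (Or.inl ⟨rfl, hab⟩)⟩

/-- Embedding of `G` into the rooted product via the roots. -/
def baseHom : G →g rootedProd G H v where
  toFun g := (g, v)
  map_rel' := by
    intro a b hab
    rw [rootedProd, fromRel_adj]
    exact ⟨by simp [Prod.ext_iff, hab.ne], Or.inl (Or.inr ⟨rfl, rfl, hab⟩)⟩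

open Classical in
/-- The claimed distance in the rooted product from `a` to `t`. -/
noncomputable def fdist (t a : V × W) : ℕ :=
  if a.1 = t.1 then H.dist a.2 t.2 else H.dist a.2 v + G.dist a.1 t.1 + H.dist v t.2

variable {G H v}

lemma rootedProd_adj_cases {a b : V × W} (hab : (rootedProd G H v).Adj a b) :
    (a.1 = b.1 ∧ H.Adj a.2 b.2) ∨ (a.2 = v ∧ b.2 = v ∧ G.Adj a.1 b.1) := by
  rw [rootedProd, fromRel_adj] at hab
  rcases hab.2 with (h | h) | (h | h)
  · exact Or.inl h
  · exact Or.inr h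
  · exact Or.inl ⟨h.1.symm, h.2.symm⟩
  · exact Or.inr ⟨h.2.1, h.1, h.2.2.symm⟩

lemma fdist_lip (hG : G.Connected) (hH : H.Connected) (t : V × W) {a b : V × W}
    (hab : (rootedProd G H v).Adj a b) : fdist G H v t a ≤ fdist G H v t b + 1 := by
  rcases rootedProd_adj_cases hab with ⟨h1, h2⟩ | ⟨hv1, hv2, hadj⟩
  · have hd : ∀ x, H.dist a.2 x ≤ H.dist b.2 x + 1 := by
      intro x
      have t1 : H.dist a.2 x ≤ H.dist a.2 b.2 + H.dist b.2 x := hH.dist_triangle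
      have t2 : H.dist a.2 b.2 ≤ 1 := dist_le h2.toWalk
      omega
    simp only [fdist]
    by_cases h : a.1 = t.1
    · rw [if_pos h, if_pos (h1 ▸ h)]
      exact hd t.2
    · rw [if_neg h, if_neg (fun e => h (h1.trans e)), h1]
      have := hd v
      omega
  · have hdab : G.dist a.1 b.1 ≤ 1 := dist_le hadj.toWalk
    have hdg : G.dist a.1 t.1 ≤ G.dist b.1 t.1 + 1 := by
      have t1 : G.dist a.1 t.1 ≤ G.dist a.1 b.1 + G.dist b.1 t.1 := hG.dist_triangle
      omega
    have h00 : H.dist v v = 0 := SimpleGraph.dist_self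
    simp only [fdist, hv1, hv2]
    by_cases h : a.1 = t.1
    · rw [if_pos h]
      by_cases h' : b.1 = t.1
      · exact absurd (h.trans h'.symm) hadj.ne
      · rw [if_neg h']
        omega
    · rw [if_neg h]
      by_cases h' : b.1 = t.1
      · rw [if_pos h']
        have hle : G.dist a.1 t.1 ≤ 1 := h' ▸ hdab
        omega
      · rw [if_neg h']
        omega

lemma fdist_le_length (hG : G.Connected) (hH : H.Connected) (t : V × W) :
    ∀ {a b : V × W} (p : (rootedProd G H v).Walk a b),
      fdist G H v t a ≤ p.length + fdist G H v t b := by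
  intro a b p
  induction p with
  | nil => simp
  | cons h q ih =>
    rw [SimpleGraph.Walk.length_cons]
    have := fdist_lip hG hH t h
    omega

lemma dist_rootedProd (hG : G.Connected) (hH : H.Connected) (a t : V × W) :
    (rootedProd G H v).dist a t = fdist G H v t a := by
  obtain ⟨a1, a2⟩ := a
  obtain ⟨t1, t2⟩ := t
  obtain ⟨w2, hw2⟩ := hG.exists_walk_length_eq_dist a1 t1
  obtain ⟨w1, hw1⟩ := hH.exists_walk_length_eq_dist a2 v
  obtain ⟨w3, hw3⟩ := hH.exists_walk_length_eq_dist v t2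
  let bigwalk : (rootedProd G H v).Walk (a1, a2) (t1, t2) :=
    ((w1.map (copyHom G H v a1)).append (w2.map (baseHom G H v))).append
      (w3.map (copyHom G H v t1))
  have hbig : bigwalk.length = H.dist a2 v + G.dist a1 t1 + H.dist v t2 := by
    have e1 := Walk.length_append ((w1.map (copyHom G H v a1)).append (w2.map (baseHom G H v)))
      (w3.map (copyHom G H v t1))
    have e2 := Walk.length_append (w1.map (copyHom G H v a1)) (w2.map (baseHom G H v))
    have m1 := Walk.length_map (copyHom G H v a1) w1
    have m2 := Walk.length_map (baseHom G H v) w2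
    have m3 := Walk.length_map (copyHom G H v t1) w3
    refine e1.trans ?_
    refine (congrArg₂ (· + ·) (e2.trans (congrArg₂ (· + ·) m1 m2)) m3).trans ?_
    rw [hw1, hw2, hw3]
  apply le_antisymm
  · by_cases h : a1 = t1
    · subst h
      obtain ⟨w, hw⟩ := hH.exists_walk_length_eq_dist a2 t2
      have := dist_le (w.map (copyHom G H v a1))
      simp only [Walk.length_map, hw] at this
      have h2 : (rootedProd G H v).dist (a1, a2) (a1, t2) ≤ H.dist a2 t2 := this
      simpa [fdist] using h2
    · have := dist_le bigwalk
      rw [hbig] at this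
      simpa [fdist, h] using this
  · obtain ⟨p, hp⟩ := bigwalk.reachable.exists_walk_length_eq_dist
    have h0 : fdist G H v (t1, t2) (t1, t2) = 0 := by
      simp [fdist, SimpleGraph.dist_self]
    have := fdist_le_length hG hH (t1, t2) p
    omega

/-- In a non-bipartite connected graph there are adjacent vertices equidistant
from any fixed vertex. -/
lemma exists_adj_dist_eq (hH : H.Connected) (hnb : ¬ H.Colorable 2) :
    ∃ a b : W, H.Adj a b ∧ H.dist a v = H.dist b v := by
  by_contra hcon
  push_neg at hcon
  apply hnb
  refine ⟨Coloring.mk (fun w => (⟨H.dist w v % 2, by omega⟩ : Fin 2)) ?_⟩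
  intro a b hadj
  have hne := hcon a b hadj
  have t1 : H.dist a v ≤ H.dist a b + H.dist b v := hH.dist_triangle
  have t2 : H.dist b v ≤ H.dist b a + H.dist a v := hH.dist_triangle
  have e1 : H.dist a b ≤ 1 := dist_le hadj.toWalk
  have e2 : H.dist b a ≤ 1 := dist_le hadj.symm.toWalk
  simp only [Fin.mk.injEq, ne_eq]
  omega

end Aux

/-- For G connected of order n ≥ 2 and H connected non-bipartite of order n',
n ≤ dim_l(G ∘_v H) ≤ n(n' - 2). -/
theorem localMetricDim_rootedProd_bounds {V W : Type*} [Fintype V] [Fintype W]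
    (G : SimpleGraph V) (H : SimpleGraph W) (v : W) (hG : G.Connected) (hH : H.Connected)
    (hnb : ¬ H.Colorable 2) (hn : 2 ≤ Fintype.card V) :
    Fintype.card V ≤ localMetricDim (rootedProd G H v) ∧
      localMetricDim (rootedProd G H v) ≤ Fintype.card V * (Fintype.card W - 2) := by
  classical
  set R := rootedProd G H v with hR
  have hdist : ∀ a t : V × W, R.dist a t = fdist G H v t a := fun a t =>
    dist_rootedProd hG hH a t
  have hw3 : 3 ≤ Fintype.card W := by
    by_contra h
    push_neg at h
    exact hnb ((H.colorable_of_fintype).mono (by omega))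
  -- the defining set is nonempty (univ is a generator)
  have huniv : IsLocalMetricGenerator R ↑(Finset.univ : Finset (V × W)) := by
    intro p q hpq
    refine ⟨p, by simp, ?_⟩
    have h0 : R.dist p p = 0 := SimpleGraph.dist_self
    have hpos : 0 < R.dist q p := (hpq.symm.reachable).pos_dist_of_ne hpq.ne.symm
    omega
  have hne : {k | ∃ S : Finset (V × W), IsLocalMetricGenerator R ↑S ∧ S.card = k}.Nonempty :=
    ⟨(Finset.univ : Finset (V × W)).card, Finset.univ, huniv, rfl⟩
  constructor
  · -- lower bound
    obtain ⟨S, hSgen, hScard⟩ := Nat.sInf_mem hne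
    obtain ⟨a, b, hab, habd⟩ := exists_adj_dist_eq (v := v) hH hnb
    have hedge : ∀ g : V, R.Adj (g, a) (g, b) := fun g => (copyHom G H v g).map_adj hab
    choose w hw hwne using fun g => hSgen (hedge g)
    have hfst : ∀ g : V, (w g).1 = g := by
      intro g
      by_contra h
      apply hwne g
      rw [hdist, hdist, fdist, fdist]
      have : ¬ ((g, a).1 = (w g).1) := fun e => h e.symm
      rw [if_neg this, if_neg this, habd]
    calc Fintype.card V = (Finset.univ : Finset V).card := (Finset.card_univ).symm
      _ ≤ S.card := Finset.card_le_card_of_injOn w (fun g _ => hw g)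
          (fun g1 _ g2 _ he => by rw [← hfst g1, he, hfst g2])
      _ = localMetricDim R := hScard
  · -- upper bound
    obtain ⟨u, hu⟩ := Fintype.exists_ne_of_one_lt_card (by omega) v
    -- a vertex distinct from both v and u
    have hcard2 : ({v, u} : Finset W).card ≤ 2 := by
      apply le_trans (Finset.card_insert_le _ _)
      simp
    have hsd : 1 ≤ (Finset.univ \ ({v, u} : Finset W)).card := by
      have := Finset.le_card_sdiff ({v, u} : Finset W) Finset.univ
      rw [Finset.card_univ] at this
      omega
    have hsd' : (Finset.univ \ ({v, u} : Finset W)).Nonempty :=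
      Finset.card_pos.mp (by omega)
    obtain ⟨w0, hw0⟩ := hsd'
    rw [Finset.mem_sdiff, Finset.mem_insert, Finset.mem_singleton] at hw0
    push_neg at hw0
    obtain ⟨-, hw0v, hw0u⟩ := hw0
    set S : Finset (V × W) := Finset.univ ×ˢ (Finset.univ \ ({v, u} : Finset W)) with hS
    have hmem : ∀ p : V × W, p ∈ S ↔ p.2 ≠ v ∧ p.2 ≠ u := by
      intro p
      simp [hS]
    have hSgen : IsLocalMetricGenerator R ↑S := by
      intro p q hpq
      by_cases hp : p.2 ≠ v ∧ p.2 ≠ u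
      · refine ⟨p, by simpa [hmem] using hp, ?_⟩
        have h0 : R.dist p p = 0 := SimpleGraph.dist_self
        have hpos : 0 < R.dist q p := (hpq.symm.reachable).pos_dist_of_ne hpq.ne.symm
        omega
      by_cases hq : q.2 ≠ v ∧ q.2 ≠ u
      · refine ⟨q, by simpa [hmem] using hq, ?_⟩
        have h0 : R.dist q q = 0 := SimpleGraph.dist_self
        have hpos : 0 < R.dist p q := (hpq.reachable).pos_dist_of_ne hpq.ne
        omega
      push_neg at hp hq
      have hp2 : p.2 = v ∨ p.2 = u := by tauto
      have hq2 : q.2 = v ∨ q.2 = u := by tauto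
      rcases rootedProd_adj_cases hpq with ⟨h1, h2⟩ | ⟨hv1, hv2, hadj⟩
      · -- edge inside one copy, endpoints are {v, u}
        obtain ⟨g', hg'⟩ := Fintype.exists_ne_of_one_lt_card (by omega) p.1
        refine ⟨(g', w0), by simp [hmem, hw0v, hw0u], ?_⟩
        rw [hdist, hdist, fdist, fdist]
        have hc1 : ¬ ((p.1 : V) = (g', w0).1) := fun e => hg' e.symm
        have hc2 : ¬ ((q.1 : V) = (g', w0).1) := fun e => hg' (h1 ▸ e).symm
        rw [if_neg hc1, if_neg hc2, ← h1]
        have hkey : (H.dist p.2 v = 0 ∧ 0 < H.dist q.2 v) ∨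
            (0 < H.dist p.2 v ∧ H.dist q.2 v = 0) := by
          have hne2 : p.2 ≠ q.2 := h2.ne
          rcases hp2 with hpv | hpu
          · have hqu : q.2 = u := by
              rcases hq2 with h | h
              · exact absurd (hpv.trans h.symm) hne2
              · exact h
            exact Or.inl ⟨by simp [hpv], by rw [hqu]; exact hH.pos_dist_of_ne hu⟩
          · have hqv : q.2 = v := by
              rcases hq2 with h | h
              · exact h
              · exact absurd (hpu.trans h.symm) hne2
            exact Or.inr ⟨by rw [hpu]; exact hH.pos_dist_of_ne hu, by simp [hqv]⟩
        omega
      · -- edge between roots of two copies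
        refine ⟨(p.1, w0), by simp [hmem, hw0v, hw0u], ?_⟩
        rw [hdist, hdist, fdist, fdist]
        have hc1 : ((p.1 : V) = (p.1, w0).1) := rfl
        have hc2 : ¬ ((q.1 : V) = (p.1, w0).1) := fun e => hadj.ne e.symm
        rw [if_pos hc1, if_neg hc2, hv1, hv2, SimpleGraph.dist_self]
        have hpos : 0 < G.dist q.1 (p.1, w0).1 := hG.pos_dist_of_ne (fun e => hadj.ne e.symm)
        omega
    have hScard : S.card = Fintype.card V * (Fintype.card W - 2) := by
      rw [hS, Finset.card_product, Finset.card_univ,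
        Finset.card_sdiff_of_subset (Finset.subset_univ _), Finset.card_univ]
      congr 1
      rw [Finset.card_insert_of_notMem (by simpa using (Ne.symm hu)), Finset.card_singleton]
    exact hScard ▸ Nat.sInf_le ⟨S, hSgen, rfl⟩
end

section
/- Let G be a connected graph of order n ≥ 2, H a connected non-bipartite graph of order n′, and v ∈ V(H). Then dim_l(G∘_v H) = n(n′−2) if and only if H is the complete graph K_{n′}. -/
open SimpleGraph

namespace RootedAux

variable {V W : Type*} {G : SimpleGraph V} {H : SimpleGraph W} {v : W}

lemma adj_copy {g : V} {x y : W} (h : H.Adj x y) :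
    (rootedProd G H v).Adj (g, x) (g, y) := by
  rw [rootedProd, fromRel_adj]
  exact ⟨by simp [h.ne], Or.inl (Or.inl ⟨rfl, h⟩)⟩

lemma adj_root {g g' : V} (h : G.Adj g g') :
    (rootedProd G H v).Adj (g, v) (g', v) := by
  rw [rootedProd, fromRel_adj]
  exact ⟨by simp [h.ne], Or.inl (Or.inr ⟨rfl, rfl, h⟩)⟩

/-- lift an H-walk into copy g -/
lemma lift_copy (g : V) {x y : W} (p : H.Walk x y) :
    ∃ q : (rootedProd G H v).Walk (g, x) (g, y), q.length = p.length := by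
  induction p with
  | nil => exact ⟨.nil, rfl⟩
  | cons h p ih =>
      obtain ⟨q, hq⟩ := ih
      exact ⟨.cons (adj_copy h) q, by simp [hq]⟩

lemma lift_root {g g' : V} (p : G.Walk g g') :
    ∃ q : (rootedProd G H v).Walk (g, v) (g', v), q.length = p.length := by
  induction p with
  | nil => exact ⟨.nil, rfl⟩
  | cons h p ih =>
      obtain ⟨q, hq⟩ := ih
      exact ⟨.cons (adj_root h) q, by simp [hq]⟩

lemma rconn (hG : G.Connected) (hH : H.Connected) : (rootedProd G H v).Connected := by
  have hne : Nonempty (V × W) := ⟨hG.nonempty.some, hH.nonempty.some⟩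
  refine ⟨fun u w => ?_⟩
  obtain ⟨p1⟩ := hH.preconnected u.2 v
  obtain ⟨p2⟩ := hG.preconnected u.1 w.1
  obtain ⟨p3⟩ := hH.preconnected v w.2
  obtain ⟨q1, -⟩ := lift_copy (G := G) (v := v) u.1 p1
  obtain ⟨q2, -⟩ := lift_root (H := H) (v := v) p2
  obtain ⟨q3, -⟩ := lift_copy (G := G) (v := v) w.1 p3
  exact ⟨((q1.append q2).append q3).copy (by simp) (by simp)⟩

/-- project an R-walk to an H-walk -/
lemma proj_walk {u w : V × W} (p : (rootedProd G H v).Walk u w) :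
    ∃ q : H.Walk u.2 w.2, q.length ≤ p.length := by
  induction p with
  | nil => exact ⟨.nil, by simp⟩
  | @cons a b c h p ih =>
      obtain ⟨q, hq⟩ := ih
      rw [rootedProd, fromRel_adj] at h
      rcases h.2 with (⟨-, h2⟩ | ⟨h2, h3, -⟩) | (⟨-, h2⟩ | ⟨h2, h3, -⟩)
      · exact ⟨.cons h2 q, by simpa using Nat.succ_le_succ hq⟩
      · exact ⟨q.copy (h3.trans h2.symm) rfl, by simpa using Nat.le_succ_of_le hq⟩
      · exact ⟨.cons h2.symm q, by simpa using Nat.succ_le_succ hq⟩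
      · exact ⟨q.copy (h2.trans h3.symm) rfl, by simpa using Nat.le_succ_of_le hq⟩

lemma dist_copy (hG : G.Connected) (hH : H.Connected) (g : V) (x y : W) :
    (rootedProd G H v).dist (g, x) (g, y) = H.dist x y := by
  refine le_antisymm ?_ ?_
  · obtain ⟨p, hp⟩ := hH.exists_walk_length_eq_dist x y
    obtain ⟨q, hq⟩ := lift_copy (G := G) (v := v) g p
    exact hp ▸ hq ▸ SimpleGraph.dist_le q
  · obtain ⟨p, hp⟩ := (rconn hG hH).exists_walk_length_eq_dist (g, x) (g, y)
    obtain ⟨q, hq⟩ := proj_walk p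
    exact le_trans (SimpleGraph.dist_le q) (hp ▸ hq)

lemma root_mem_support {u w : V × W} (p : (rootedProd G H v).Walk u w) (hne : u.1 ≠ w.1) :
    (u.1, v) ∈ p.support := by
  induction p with
  | nil => exact absurd rfl hne
  | @cons a b c h p ih =>
      rw [SimpleGraph.Walk.support_cons]
      rw [rootedProd, fromRel_adj] at h
      rcases h.2 with (⟨h2, -⟩ | ⟨h2, -, -⟩) | (⟨h2, -⟩ | ⟨-, h2, -⟩)
      · exact List.mem_cons_of_mem _ (h2 ▸ ih (h2 ▸ hne))
      · rw [show a = (a.1, v) from Prod.ext rfl h2]; exact List.mem_cons_self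
      · exact List.mem_cons_of_mem _ (h2 ▸ ih (h2 ▸ hne))
      · rw [show a = (a.1, v) from Prod.ext rfl h2]; exact List.mem_cons_self

end RootedAux

namespace RootedAux

variable {V W : Type*} {G : SimpleGraph V} {H : SimpleGraph W} {v : W}

lemma dist_split {X : Type*} [DecidableEq X] {Γ : SimpleGraph X} (hconn : Γ.Connected) {u c w : X}
    (hc : ∀ p : Γ.Walk u w, c ∈ p.support) :
    Γ.dist u w = Γ.dist u c + Γ.dist c w := by
  refine le_antisymm hconn.dist_triangle ?_
  obtain ⟨p, hp⟩ := hconn.exists_walk_length_eq_dist u w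
  have h := hc p
  have hl := congr_arg SimpleGraph.Walk.length (p.take_spec h)
  rw [SimpleGraph.Walk.length_append] at hl
  calc Γ.dist u c + Γ.dist c w ≤ (p.takeUntil c h).length + (p.dropUntil c h).length :=
        Nat.add_le_add (SimpleGraph.dist_le _) (SimpleGraph.dist_le _)
    _ = p.length := hl
    _ = Γ.dist u w := hp

lemma dist_cross (hG : G.Connected) (hH : H.Connected) {g g' : V} (hgg : g ≠ g') (x y : W) :
    (rootedProd G H v).dist (g, x) (g', y)
      = H.dist x v + ((rootedProd G H v).dist (g, v) (g', v) + H.dist v y) := by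
  classical
  have hRc : (rootedProd G H v).Connected := rconn hG hH
  have h1 : (rootedProd G H v).dist (g, x) (g', y)
      = (rootedProd G H v).dist (g, x) (g, v) + (rootedProd G H v).dist (g, v) (g', y) :=
    dist_split hRc (fun p => root_mem_support p hgg)
  have h2 : (rootedProd G H v).dist (g', y) (g, v)
      = (rootedProd G H v).dist (g', y) (g', v) + (rootedProd G H v).dist (g', v) (g, v) :=
    dist_split hRc (fun p => root_mem_support p hgg.symm)
  rw [h1, dist_copy hG hH, SimpleGraph.dist_comm (u := (g,v)), h2, dist_copy hG hH,
    SimpleGraph.dist_comm (u := ((g',v) : V × W)), SimpleGraph.dist_comm (u := y)]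
  ring

lemma gen_of [Fintype V] [Fintype W] (hG : G.Connected) (hH : H.Connected)
    (hn : 2 ≤ Fintype.card V) (SH : Finset W) (hv : v ∉ SH) (hne : SH.Nonempty)
    (hhor : ∀ x y, H.Adj x y → x ∉ SH → y ∉ SH → H.dist x v ≠ H.dist y v) :
    IsLocalMetricGenerator (rootedProd G H v) ((Finset.univ ×ˢ SH : Finset (V × W)) : Set (V × W)) := by
  classical
  have hRc : (rootedProd G H v).Connected := rconn hG hH
  have main : ∀ (g g2 : V) (x y : W),
      ((g = g2 ∧ H.Adj x y) ∨ (x = v ∧ y = v ∧ G.Adj g g2)) → ((g,x) : V × W) ≠ (g2,y) →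
      ∃ w ∈ (Finset.univ ×ˢ SH : Finset (V × W)),
        (rootedProd G H v).dist (g,x) w ≠ (rootedProd G H v).dist (g2,y) w := by
    rintro g g2 x y (⟨rfl, hadj⟩ | ⟨hxv, hyv, hadjG⟩) hne2
    · by_cases hx : x ∈ SH
      · refine ⟨(g, x), by simp [Finset.mem_product, hx], ?_⟩
        rw [SimpleGraph.dist_self]
        have : 0 < (rootedProd G H v).dist (g, y) (g, x) :=
          hRc.pos_dist_of_ne (by simp [Prod.ext_iff, hadj.ne'])
        omega
      · by_cases hy : y ∈ SH
        · refine ⟨(g, y), by simp [Finset.mem_product, hy], ?_⟩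
          rw [SimpleGraph.dist_self]
          have : 0 < (rootedProd G H v).dist (g, x) (g, y) :=
            hRc.pos_dist_of_ne (by simp [Prod.ext_iff, hadj.ne])
          omega
        · obtain ⟨z, hz⟩ := hne
          obtain ⟨g', hg'⟩ := Fintype.exists_ne_of_one_lt_card (by omega) g
          refine ⟨(g', z), by simp [Finset.mem_product, hz], ?_⟩
          rw [dist_cross hG hH (Ne.symm hg') x z, dist_cross hG hH (Ne.symm hg') y z]
          have := hhor x y hadj hx hy
          omega
    · subst x; subst y
      have hgg : g ≠ g2 := fun h => hne2 (by rw [h])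
      obtain ⟨z, hz⟩ := hne
      refine ⟨(g, z), by simp [Finset.mem_product, hz], ?_⟩
      rw [dist_copy hG hH, dist_cross hG hH hgg.symm v z]
      have h0 : H.dist v v = 0 := SimpleGraph.dist_self
      have hD : 0 < (rootedProd G H v).dist (g2, v) (g, v) :=
        hRc.pos_dist_of_ne (by simp [Prod.ext_iff, hgg.symm])
      omega
  intro a b hab
  rw [rootedProd, fromRel_adj] at hab
  obtain ⟨hne2, h | h⟩ := hab
  · exact main a.1 b.1 a.2 b.2 h hne2
  · obtain ⟨w, hw, hd⟩ := main b.1 a.1 b.2 a.2 h (Ne.symm hne2)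
    exact ⟨w, hw, Ne.symm hd⟩

end RootedAux
/-- dim_l(G ∘_v H) = n(n′ - 2) iff H is the complete graph on n′ vertices. -/
theorem localMetricDim_rootedProd_eq_upper_iff {V W : Type*} [Fintype V] [Fintype W]
    (G : SimpleGraph V) (H : SimpleGraph W) (v : W) (hG : G.Connected) (hH : H.Connected)
    (hnb : ¬ H.Colorable 2) (hn : 2 ≤ Fintype.card V) :
    localMetricDim (rootedProd G H v) = Fintype.card V * (Fintype.card W - 2) ↔
      H = ⊤ := by
  classical
  have hW3 : 3 ≤ Fintype.card W := by
    by_contra h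
    push_neg at h
    exact hnb ((H.colorable_of_fintype).mono (by omega))
  constructor
  · -- forward direction
    intro heq
    by_contra hnot
    have hpair : ∃ x y : W, x ≠ y ∧ ¬ H.Adj x y := by
      by_contra h
      push_neg at h
      refine hnot ?_
      ext a b
      rw [SimpleGraph.top_adj]
      exact ⟨fun hadj => hadj.ne, fun hne' => h a b hne'⟩
    obtain ⟨x0, y0, hxy, hnadj⟩ := hpair
    have hW4 : 4 ≤ Fintype.card W := by
      by_contra h
      push_neg at h
      refine hnb ⟨SimpleGraph.Coloring.mk
        (fun w => if w = x0 ∨ w = y0 then (0 : Fin 2) else 1) ?_⟩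
      intro a b hab hcol
      by_cases ha : a = x0 ∨ a = y0
      · by_cases hb : b = x0 ∨ b = y0
        · rcases ha with rfl | rfl <;> rcases hb with rfl | rfl
          · exact hab.ne rfl
          · exact hnadj hab
          · exact hnadj hab.symm
          · exact hab.ne rfl
        · simp [ha, hb] at hcol
      · by_cases hb : b = x0 ∨ b = y0
        · simp [ha, hb] at hcol
        · push_neg at ha hb
          have h4 : ({a, b, x0, y0} : Finset W).card = 4 := by
            rw [Finset.card_insert_of_notMem (by simp [hab.ne, ha.1, ha.2]),
                Finset.card_insert_of_notMem (by simp [hb.1, hb.2]),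
                Finset.card_pair hxy]
          have h5 : ({a, b, x0, y0} : Finset W).card ≤ Fintype.card W := by
            simpa using Finset.card_le_univ ({a, b, x0, y0} : Finset W)
          omega
    have hkey : ∃ p q : W, p ≠ q ∧ p ≠ v ∧ q ≠ v ∧
        (¬ H.Adj p q ∨ H.dist p v ≠ H.dist q v) := by
      have helper : ∀ z : W, z ≠ v → ¬ H.Adj z v → ∃ p q : W, p ≠ q ∧ p ≠ v ∧ q ≠ v ∧
          (¬ H.Adj p q ∨ H.dist p v ≠ H.dist q v) := by
        intro z hzv hznadj
        obtain ⟨p, hp⟩ := hH.exists_walk_length_eq_dist z v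
        cases p with
        | nil => exact absurd rfl hzv
        | @cons _ c _ hadj p' =>
            have hcv : c ≠ v := fun h => hznadj (h ▸ hadj)
            have hlt : H.dist c v < H.dist z v := by
              have hle := SimpleGraph.dist_le p'
              rw [SimpleGraph.Walk.length_cons] at hp
              omega
            exact ⟨z, c, hadj.ne, hzv, hcv, Or.inr (by omega)⟩
      by_cases hx0 : x0 = v
      · exact helper y0 (fun h => hxy (hx0.trans h.symm))
          (fun h => hnadj (hx0.symm ▸ h.symm))
      · by_cases hy0 : y0 = v
        · exact helper x0 (fun h => hxy (h.trans hy0.symm)) (fun h => hnadj (hy0.symm ▸ h))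
        · exact ⟨x0, y0, hxy, hx0, hy0, Or.inl hnadj⟩
    obtain ⟨p, q, hpq, hpv, hqv, hcond⟩ := hkey
    set SH : Finset W := ((Finset.univ.erase v).erase p).erase q with hSHdef
    have hqmem : q ∈ (Finset.univ.erase v).erase p :=
      Finset.mem_erase.mpr ⟨Ne.symm hpq, Finset.mem_erase.mpr ⟨hqv, Finset.mem_univ q⟩⟩
    have hpmem : p ∈ Finset.univ.erase v := Finset.mem_erase.mpr ⟨hpv, Finset.mem_univ p⟩
    have hcard : SH.card = Fintype.card W - 3 := by
      rw [hSHdef, Finset.card_erase_of_mem hqmem, Finset.card_erase_of_mem hpmem,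
        Finset.card_erase_of_mem (Finset.mem_univ v), Finset.card_univ]
      omega
    have hvSH : v ∉ SH := by simp [hSHdef]
    have hSHne : SH.Nonempty := Finset.card_pos.mp (by omega)
    have hhor : ∀ x y, H.Adj x y → x ∉ SH → y ∉ SH → H.dist x v ≠ H.dist y v := by
      intro x y hadj hx hy
      have hmem : ∀ z : W, z ∉ SH → z = q ∨ z = p ∨ z = v := by
        intro z hz
        by_contra hc
        push_neg at hc
        exact hz (by simp [hSHdef, Finset.mem_erase, hc.1, hc.2.1, hc.2.2])
      have hd0 : H.dist v v = 0 := SimpleGraph.dist_self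
      have hdp : 0 < H.dist p v := hH.pos_dist_of_ne hpv
      have hdq : 0 < H.dist q v := hH.pos_dist_of_ne hqv
      rcases hcond with hc | hc <;>
        rcases hmem x hx with rfl | rfl | rfl <;> rcases hmem y hy with rfl | rfl | rfl <;>
          first
            | exact absurd rfl hadj.ne
            | exact absurd hadj hc
            | exact absurd hadj.symm hc
            | omega
    have hgen := RootedAux.gen_of hG hH hn SH hvSH hSHne hhor
    have hle : localMetricDim (rootedProd G H v) ≤ Fintype.card V * (Fintype.card W - 3) :=
      Nat.sInf_le ⟨Finset.univ ×ˢ SH, hgen,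
        by rw [Finset.card_product, Finset.card_univ, hcard]⟩
    have hlt : Fintype.card V * (Fintype.card W - 3) <
        Fintype.card V * (Fintype.card W - 2) :=
      mul_lt_mul_of_pos_left (by omega) (by omega)
    rw [heq] at hle
    exact absurd hle (Nat.not_le.mpr hlt)
  · -- backward direction
    rintro rfl
    have hRc : (rootedProd G (⊤ : SimpleGraph W) v).Connected := RootedAux.rconn hG hH
    obtain ⟨u0, hu0⟩ := Fintype.exists_ne_of_one_lt_card (by omega) v
    set SH : Finset W := (Finset.univ.erase v).erase u0 with hSHdef
    have hcard : SH.card = Fintype.card W - 2 := by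
      rw [hSHdef, Finset.card_erase_of_mem
          (Finset.mem_erase.mpr ⟨hu0, Finset.mem_univ u0⟩),
        Finset.card_erase_of_mem (Finset.mem_univ v), Finset.card_univ]
      omega
    have hvSH : v ∉ SH := by simp [hSHdef]
    have hSHne : SH.Nonempty := Finset.card_pos.mp (by omega)
    have hhor : ∀ x y, (⊤ : SimpleGraph W).Adj x y → x ∉ SH → y ∉ SH →
        (⊤ : SimpleGraph W).dist x v ≠ (⊤ : SimpleGraph W).dist y v := by
      intro x y hadj hx hy
      have hmem : ∀ z : W, z ∉ SH → z = u0 ∨ z = v := by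
        intro z hz
        by_contra hc
        push_neg at hc
        exact hz (by simp [hSHdef, Finset.mem_erase, hc.1, hc.2])
      have hd0 : (⊤ : SimpleGraph W).dist v v = 0 := SimpleGraph.dist_self
      have hdu : 0 < (⊤ : SimpleGraph W).dist u0 v := hH.pos_dist_of_ne hu0
      rcases hmem x hx with rfl | rfl <;> rcases hmem y hy with rfl | rfl <;>
        first
          | exact absurd rfl hadj.ne
          | omega
    have hgen := RootedAux.gen_of hG hH hn SH hvSH hSHne hhor
    refine le_antisymm (Nat.sInf_le ⟨Finset.univ ×ˢ SH, hgen,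
        by rw [Finset.card_product, Finset.card_univ, hcard]⟩) ?_
    refine le_csInf ⟨_, Finset.univ ×ˢ SH, hgen, rfl⟩ ?_
    rintro k ⟨S, hSgen, rfl⟩
    -- lower bound
    have key2 : ∀ (g : V) (x y : W), x ≠ y → x ≠ v → y ≠ v →
        ((g, x) ∈ S ∨ (g, y) ∈ S) := by
      intro g x y hxy hxv hyv
      have hadj : (rootedProd G (⊤ : SimpleGraph W) v).Adj (g, x) (g, y) :=
        RootedAux.adj_copy ((SimpleGraph.top_adj x y).mpr hxy)
      obtain ⟨w, hwS, hwd⟩ := hSgen hadj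
      by_contra hcon
      push_neg at hcon
      apply hwd
      obtain ⟨gw, zw⟩ := w
      have hwx : ((gw, zw) : V × W) ≠ (g, x) := fun h => hcon.1 (h ▸ hwS)
      have hwy : ((gw, zw) : V × W) ≠ (g, y) := fun h => hcon.2 (h ▸ hwS)
      by_cases hgw : gw = g
      · rw [hgw]
        have hzx : zw ≠ x := fun h => hwx (by rw [h, hgw])
        have hzy : zw ≠ y := fun h => hwy (by rw [h, hgw])
        rw [RootedAux.dist_copy hG hH g x zw, RootedAux.dist_copy hG hH g y zw,
          SimpleGraph.dist_eq_one_iff_adj.mpr ((SimpleGraph.top_adj x zw).mpr (Ne.symm hzx)),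
          SimpleGraph.dist_eq_one_iff_adj.mpr ((SimpleGraph.top_adj y zw).mpr (Ne.symm hzy))]
      · have hggw : g ≠ gw := fun h => hgw h.symm
        rw [RootedAux.dist_cross hG hH hggw x zw, RootedAux.dist_cross hG hH hggw y zw,
          SimpleGraph.dist_eq_one_iff_adj.mpr ((SimpleGraph.top_adj x v).mpr hxv),
          SimpleGraph.dist_eq_one_iff_adj.mpr ((SimpleGraph.top_adj y v).mpr hyv)]
    set A : V → Finset (V × W) := fun g => (Finset.univ.erase v).image (fun z => (g, z))
      with hAdef
    have hAmem : ∀ (g : V) (pp : V × W),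
        pp ∈ A g ↔ ∃ z ∈ Finset.univ.erase v, ((g, z) : V × W) = pp := by
      intro g pp
      rw [hAdef]
      exact Finset.mem_image
    have hcardA : ∀ g, (A g).card = Fintype.card W - 1 := by
      intro g
      have hinj : Function.Injective (fun z : W => ((g, z) : V × W)) := by
        intro z1 z2 h
        exact congrArg Prod.snd h
      simp only [hAdef]
      rw [Finset.card_image_of_injective _ hinj,
        Finset.card_erase_of_mem (Finset.mem_univ v), Finset.card_univ]
    have hsdiff : ∀ g, (A g \ S).card ≤ 1 := by
      intro g
      by_contra hgt
      obtain ⟨a, ha, b, hb, hab⟩ := Finset.one_lt_card.mp (show 1 < (A g \ S).card by omega)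
      rw [Finset.mem_sdiff] at ha hb
      obtain ⟨x, hx, rfl⟩ := (hAmem g a).mp ha.1
      obtain ⟨y, hy, rfl⟩ := (hAmem g b).mp hb.1
      rw [Finset.mem_erase] at hx hy
      have hxy : x ≠ y := fun h => hab (by rw [h])
      rcases key2 g x y hxy hx.1 hy.1 with h | h
      · exact ha.2 h
      · exact hb.2 h
    have hinter : ∀ g, Fintype.card W - 2 ≤ (A g ∩ S).card := by
      intro g
      have h1 := Finset.card_inter_add_card_sdiff (A g) S
      have h2 := hcardA g
      have h3 := hsdiff g
      omega
    have hbu : (Finset.univ.biUnion (fun g => A g ∩ S)).card = ∑ g, (A g ∩ S).card := by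
      refine Finset.card_biUnion ?_
      intro a _ b _ hab
      rw [Function.onFun, Finset.disjoint_left]
      intro pp hp1 hp2
      obtain ⟨z1, -, e1⟩ := (hAmem a pp).mp (Finset.mem_inter.mp hp1).1
      obtain ⟨z2, -, e2⟩ := (hAmem b pp).mp (Finset.mem_inter.mp hp2).1
      exact hab ((congrArg Prod.fst e1).trans (congrArg Prod.fst e2).symm)
    calc Fintype.card V * (Fintype.card W - 2)
        = ∑ _g : V, (Fintype.card W - 2) := by
          rw [Finset.sum_const, Finset.card_univ, smul_eq_mul]
      _ ≤ ∑ g : V, (A g ∩ S).card := Finset.sum_le_sum (fun g _ => hinter g)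
      _ = (Finset.univ.biUnion (fun g => A g ∩ S)).card := hbu.symm
      _ ≤ S.card := Finset.card_le_card (Finset.biUnion_subset.mpr
            (fun g _ => Finset.inter_subset_right))
end

section
/- Let H = ⟨v⟩ + (K_r ∪ K_s) with r ≥ 2, s ≥ 2 be the join of a single vertex v with the disjoint union of two complete graphs K_r and K_s, a graph of order n′ = r+s+1. Then dim_l(H) = n′−3, and v does not belong to any local metric basis of H. -/
open SimpleGraph

/-- The graph ⟨v⟩ + (K_r ∪ K_s): a vertex (`none`) joined to the disjoint
union of two complete graphs K_r and K_s. -/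
def oneJoinTwoCliques (r s : ℕ) : SimpleGraph (Option (Fin r ⊕ Fin s)) :=
  SimpleGraph.fromRel (fun a b => match a, b with
    | none, some _ => True
    | some (.inl _), some (.inl _) => True
    | some (.inr _), some (.inr _) => True
    | _, _ => False)

namespace OJTCAux

variable {r s : ℕ}

lemma adj_none (x : Fin r ⊕ Fin s) : (oneJoinTwoCliques r s).Adj none (some x) := by
  simp [oneJoinTwoCliques]

lemma adj_inl {a b : Fin r} (h : a ≠ b) :
    (oneJoinTwoCliques r s).Adj (some (.inl a)) (some (.inl b)) := by
  simp [oneJoinTwoCliques, h]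

lemma adj_inr {a b : Fin s} (h : a ≠ b) :
    (oneJoinTwoCliques r s).Adj (some (.inr a)) (some (.inr b)) := by
  simp [oneJoinTwoCliques, h]

lemma not_adj_mixed (a : Fin r) (b : Fin s) :
    ¬ (oneJoinTwoCliques r s).Adj (some (.inl a)) (some (.inr b)) := by
  simp [oneJoinTwoCliques]

lemma dist_none_some (x : Fin r ⊕ Fin s) :
    (oneJoinTwoCliques r s).dist none (some x) = 1 :=
  dist_eq_one_iff_adj.mpr (adj_none x)

lemma dist_some_none (x : Fin r ⊕ Fin s) :
    (oneJoinTwoCliques r s).dist (some x) none = 1 :=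
  dist_eq_one_iff_adj.mpr (adj_none x).symm

lemma dist_inl_inl (a b : Fin r) :
    (oneJoinTwoCliques r s).dist (some (.inl a)) (some (.inl b))
      = if a = b then 0 else 1 := by
  split
  · subst ‹a = b›; exact dist_self
  · exact dist_eq_one_iff_adj.mpr (adj_inl ‹a ≠ b›)

lemma dist_inr_inr (a b : Fin s) :
    (oneJoinTwoCliques r s).dist (some (.inr a)) (some (.inr b))
      = if a = b then 0 else 1 := by
  split
  · subst ‹a = b›; exact dist_self
  · exact dist_eq_one_iff_adj.mpr (adj_inr ‹a ≠ b›)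

lemma dist_inl_inr (a : Fin r) (b : Fin s) :
    (oneJoinTwoCliques r s).dist (some (.inl a)) (some (.inr b)) = 2 := by
  have w : (oneJoinTwoCliques r s).Walk (some (.inl a)) (some (.inr b)) :=
    Walk.cons (adj_none (Sum.inl a)).symm (Walk.cons (adj_none (Sum.inr b)) Walk.nil)
  have h2 : (oneJoinTwoCliques r s).dist (some (.inl a)) (some (.inr b)) ≤ 2 := by
    simpa using dist_le
      (Walk.cons (adj_none (Sum.inl a)).symm (Walk.cons (adj_none (Sum.inr b)) Walk.nil))
  have h0 : (oneJoinTwoCliques r s).dist (some (.inl a)) (some (.inr b)) ≠ 0 := by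
    intro h
    rw [dist_eq_zero_iff_eq_or_not_reachable] at h
    rcases h with h | h
    · simp at h
    · exact h ⟨w⟩
  have h1 : (oneJoinTwoCliques r s).dist (some (.inl a)) (some (.inr b)) ≠ 1 := by
    intro h
    exact not_adj_mixed a b (dist_eq_one_iff_adj.mp h)
  omega

lemma dist_inr_inl (a : Fin s) (b : Fin r) :
    (oneJoinTwoCliques r s).dist (some (.inr a)) (some (.inl b)) = 2 := by
  rw [dist_comm]; exact dist_inl_inr b a

/-- Two distinct vertices of the same clique are at equal distance from any
third vertex. -/
lemma dist_eq_inl {a b : Fin r} {w : Option (Fin r ⊕ Fin s)}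
    (hwa : w ≠ some (.inl a)) (hwb : w ≠ some (.inl b)) :
    (oneJoinTwoCliques r s).dist (some (.inl a)) w
      = (oneJoinTwoCliques r s).dist (some (.inl b)) w := by
  rcases w with _ | (c | c)
  · rw [dist_some_none, dist_some_none]
  · have hca : a ≠ c := fun h => hwa (by rw [h])
    have hcb : b ≠ c := fun h => hwb (by rw [h])
    rw [dist_inl_inl, dist_inl_inl, if_neg hca, if_neg hcb]
  · rw [dist_inl_inr, dist_inl_inr]

lemma dist_eq_inr {a b : Fin s} {w : Option (Fin r ⊕ Fin s)}
    (hwa : w ≠ some (.inr a)) (hwb : w ≠ some (.inr b)) :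
    (oneJoinTwoCliques r s).dist (some (.inr a)) w
      = (oneJoinTwoCliques r s).dist (some (.inr b)) w := by
  rcases w with _ | (c | c)
  · rw [dist_some_none, dist_some_none]
  · rw [dist_inr_inl, dist_inr_inl]
  · have hca : a ≠ c := fun h => hwa (by rw [h])
    have hcb : b ≠ c := fun h => hwb (by rw [h])
    rw [dist_inr_inr, dist_inr_inr, if_neg hca, if_neg hcb]

/-- Lower bound: any local metric generator contains at least r-1+(s-1)
vertices other than `none`. -/
lemma lower_bound {S : Finset (Option (Fin r ⊕ Fin s))}
    (h : IsLocalMetricGenerator (oneJoinTwoCliques r s) ↑S) :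
    (r - 1) + (s - 1) ≤ (S.erase none).card := by
  classical
  set A : Finset (Fin r) := Finset.univ.filter (fun a => some (Sum.inl a) ∈ S) with hA
  set B : Finset (Fin s) := Finset.univ.filter (fun b => some (Sum.inr b) ∈ S) with hB
  have hAc : (Finset.univ.filter (fun a => ¬ some (Sum.inl a) ∈ S)).card ≤ 1 := by
    rw [Finset.card_le_one]
    intro a ha b hb
    by_contra hab
    simp only [Finset.mem_filter] at ha hb
    obtain ⟨w, hwS, hd⟩ := h (adj_inl hab)
    exact hd (dist_eq_inl (fun he => ha.2 (he ▸ hwS)) (fun he => hb.2 (he ▸ hwS)))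
  have hBc : (Finset.univ.filter (fun b => ¬ some (Sum.inr b) ∈ S)).card ≤ 1 := by
    rw [Finset.card_le_one]
    intro a ha b hb
    by_contra hab
    simp only [Finset.mem_filter] at ha hb
    obtain ⟨w, hwS, hd⟩ := h (adj_inr hab)
    exact hd (dist_eq_inr (fun he => ha.2 (he ▸ hwS)) (fun he => hb.2 (he ▸ hwS)))
  have hAcard : A.card + (Finset.univ.filter (fun a => ¬ some (Sum.inl a) ∈ S)).card = r := by
    rw [hA, Finset.card_filter_add_card_filter_not]
    simp
  have hBcard : B.card + (Finset.univ.filter (fun b => ¬ some (Sum.inr b) ∈ S)).card = s := by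
    rw [hB, Finset.card_filter_add_card_filter_not]
    simp
  have hsub : A.image (fun a => (some (Sum.inl a) : Option (Fin r ⊕ Fin s)))
      ∪ B.image (fun b => (some (Sum.inr b) : Option (Fin r ⊕ Fin s))) ⊆ S.erase none := by
    intro x hx
    rcases Finset.mem_union.mp hx with hx | hx
    · obtain ⟨a, ha, rfl⟩ := Finset.mem_image.mp hx
      simp only [hA, Finset.mem_filter] at ha
      exact Finset.mem_erase.mpr ⟨by simp, ha.2⟩
    · obtain ⟨b, hb, rfl⟩ := Finset.mem_image.mp hx
      simp only [hB, Finset.mem_filter] at hb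
      exact Finset.mem_erase.mpr ⟨by simp, hb.2⟩
  have hdisj : Disjoint (A.image (fun a => (some (Sum.inl a) : Option (Fin r ⊕ Fin s))))
      (B.image (fun b => (some (Sum.inr b) : Option (Fin r ⊕ Fin s)))) := by
    rw [Finset.disjoint_left]
    rintro x hx hy
    obtain ⟨a, -, rfl⟩ := Finset.mem_image.mp hx
    obtain ⟨b, -, hbe⟩ := Finset.mem_image.mp hy
    simp at hbe
  have hinj1 : Function.Injective (fun a : Fin r => (some (Sum.inl a) : Option (Fin r ⊕ Fin s))) :=
    fun a b hab => by simpa using hab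
  have hinj2 : Function.Injective (fun b : Fin s => (some (Sum.inr b) : Option (Fin r ⊕ Fin s))) :=
    fun a b hab => by simpa using hab
  calc (r - 1) + (s - 1) ≤ A.card + B.card := by omega
    _ = (A.image _ ∪ B.image _).card := by
        rw [Finset.card_union_of_disjoint hdisj,
          Finset.card_image_of_injective _ hinj1, Finset.card_image_of_injective _ hinj2]
    _ ≤ (S.erase none).card := Finset.card_le_card hsub

/-- The explicit generator: everything except `none`, `inl 0`, `inr 0`. -/
lemma upper_bound (hr : 2 ≤ r) (hs : 2 ≤ s) :
    ∃ S : Finset (Option (Fin r ⊕ Fin s)),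
      IsLocalMetricGenerator (oneJoinTwoCliques r s) ↑S ∧ S.card = (r - 1) + (s - 1) := by
  classical
  haveI : NeZero r := ⟨by omega⟩
  haveI : NeZero s := ⟨by omega⟩
  have hr1 : 1 < r := hr
  have hs1 : 1 < s := hs
  set S : Finset (Option (Fin r ⊕ Fin s)) :=
    ((Finset.univ.erase (0 : Fin r)).image fun a => (some (Sum.inl a))) ∪
    ((Finset.univ.erase (0 : Fin s)).image fun b => (some (Sum.inr b))) with hS
  have memL : ∀ a : Fin r, a ≠ 0 → (some (Sum.inl a) : Option (Fin r ⊕ Fin s)) ∈ S :=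
    fun a ha => Finset.mem_union_left _ (Finset.mem_image.mpr ⟨a, by simp [ha], rfl⟩)
  have memR : ∀ b : Fin s, b ≠ 0 → (some (Sum.inr b) : Option (Fin r ⊕ Fin s)) ∈ S :=
    fun b hb => Finset.mem_union_right _ (Finset.mem_image.mpr ⟨b, by simp [hb], rfl⟩)
  have h1r : (⟨1, hr1⟩ : Fin r) ≠ 0 := by simp [Fin.ext_iff]
  have h1s : (⟨1, hs1⟩ : Fin s) ≠ 0 := by simp [Fin.ext_iff]
  refine ⟨S, ?_, ?_⟩
  · intro u v hadj
    rcases u with _ | (a | a) <;> rcases v with _ | (b | b)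
    · exact absurd rfl hadj.ne
    · exact ⟨some (Sum.inr ⟨1, hs1⟩), memR _ h1s,
        by rw [dist_none_some, dist_inl_inr]; omega⟩
    · exact ⟨some (Sum.inl ⟨1, hr1⟩), memL _ h1r,
        by rw [dist_none_some, dist_inr_inl]; omega⟩
    · exact ⟨some (Sum.inr ⟨1, hs1⟩), memR _ h1s,
        by rw [dist_none_some, dist_inl_inr]; omega⟩
    · have hab : a ≠ b := fun h => hadj.ne (by rw [h])
      by_cases ha0 : a = 0
      · have hb0 : b ≠ 0 := fun h => hab (ha0.trans h.symm)
        refine ⟨some (Sum.inl b), memL _ hb0, ?_⟩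
        rw [dist_inl_inl, dist_inl_inl, if_neg hab, if_pos rfl]; omega
      · refine ⟨some (Sum.inl a), memL _ ha0, ?_⟩
        rw [dist_inl_inl, dist_inl_inl, if_neg hab.symm, if_pos rfl]; omega
    · exact absurd hadj (not_adj_mixed a b)
    · exact ⟨some (Sum.inl ⟨1, hr1⟩), memL _ h1r,
        by rw [dist_none_some, dist_inr_inl]; omega⟩
    · exact absurd hadj.symm (not_adj_mixed b a)
    · have hab : a ≠ b := fun h => hadj.ne (by rw [h])
      by_cases ha0 : a = 0
      · have hb0 : b ≠ 0 := fun h => hab (ha0.trans h.symm)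
        refine ⟨some (Sum.inr b), memR _ hb0, ?_⟩
        rw [dist_inr_inr, dist_inr_inr, if_neg hab, if_pos rfl]; omega
      · refine ⟨some (Sum.inr a), memR _ ha0, ?_⟩
        rw [dist_inr_inr, dist_inr_inr, if_neg hab.symm, if_pos rfl]; omega
  · have hinj1 : Function.Injective (fun a : Fin r => (some (Sum.inl a) : Option (Fin r ⊕ Fin s))) :=
      fun a b hab => by simpa using hab
    have hinj2 : Function.Injective (fun b : Fin s => (some (Sum.inr b) : Option (Fin r ⊕ Fin s))) :=
      fun a b hab => by simpa using hab
    have hdisj : Disjoint ((Finset.univ.erase (0 : Fin r)).image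
        fun a => (some (Sum.inl a) : Option (Fin r ⊕ Fin s)))
        ((Finset.univ.erase (0 : Fin s)).image fun b => (some (Sum.inr b))) := by
      rw [Finset.disjoint_left]
      rintro x hx hy
      obtain ⟨a, -, rfl⟩ := Finset.mem_image.mp hx
      obtain ⟨b, -, hbe⟩ := Finset.mem_image.mp hy
      simp at hbe
    rw [hS, Finset.card_union_of_disjoint hdisj,
      Finset.card_image_of_injective _ hinj1, Finset.card_image_of_injective _ hinj2,
      Finset.card_erase_of_mem (Finset.mem_univ _), Finset.card_erase_of_mem (Finset.mem_univ _)]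
    simp

end OJTCAux

/-- For H = ⟨v⟩ + (K_r ∪ K_s), r, s ≥ 2, of order n' = r + s + 1, we have
dim_l(H) = n' - 3 and the vertex v belongs to no local metric basis of H. -/
theorem localMetricDim_oneJoinTwoCliques (r s : ℕ) (hr : 2 ≤ r) (hs : 2 ≤ s) :
    localMetricDim (oneJoinTwoCliques r s) = (r + s + 1) - 3 ∧
      ∀ B : Finset (Option (Fin r ⊕ Fin s)),
        IsLocalMetricBasis (oneJoinTwoCliques r s) B → none ∉ B := by
  classical
  obtain ⟨S₀, hgen, hcard⟩ := OJTCAux.upper_bound hr hs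
  have hmem : (r + s + 1) - 3 ∈
      {k | ∃ S : Finset (Option (Fin r ⊕ Fin s)),
        IsLocalMetricGenerator (oneJoinTwoCliques r s) ↑S ∧ S.card = k} :=
    ⟨S₀, hgen, by omega⟩
  have hlb : ∀ k ∈ {k | ∃ S : Finset (Option (Fin r ⊕ Fin s)),
      IsLocalMetricGenerator (oneJoinTwoCliques r s) ↑S ∧ S.card = k},
      (r + s + 1) - 3 ≤ k := by
    rintro k ⟨S, hS, rfl⟩
    have h := OJTCAux.lower_bound hS
    have h2 : (S.erase none).card ≤ S.card := Finset.card_le_card (Finset.erase_subset _ _)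
    omega
  have hdim : localMetricDim (oneJoinTwoCliques r s) = (r + s + 1) - 3 :=
    le_antisymm (Nat.sInf_le hmem) (le_csInf ⟨_, hmem⟩ hlb)
  refine ⟨hdim, ?_⟩
  rintro B ⟨hBgen, hBcard⟩ hnone
  rw [hdim] at hBcard
  have h := OJTCAux.lower_bound hBgen
  have h2 : (B.erase none).card = B.card - 1 := Finset.card_erase_of_mem hnone
  have h3 : 0 < B.card := Finset.card_pos.mpr ⟨none, hnone⟩
  omega
end
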